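/- arXiv:1701.05277 — 7 statements merged into one kernel-verified Lean document; each statement's English description precedes it below -/
import Mathlib

section
/- Let w1, w2 be complementary words of length n. Then the complex vector space of linear maps T from functions R(w2) → ℂ to functions R(w1) → ℂ satisfying T(σ·f) = sign(σ)·(σ·(T f)) for all σ ∈ S_n and all f is exactly one-dimensional; moreover, for any nonzero such T, the image of T is a nonzero S_n-invariant subspace whose only S_n-invariant subspaces are 0 and itself (i.e., the image is an irreducible S_n-subrepresentation). -/
/-- The action of a permutation on a word: `σ · w = w ∘ σ⁻¹`. -/
def wact {n : ℕ} (σ : Equiv.Perm (Fin n)) (w : Fin n → ℕ) : Fin n → ℕ :=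
  w ∘ σ.symm

/-- `r` is a rearrangement of `w`. -/
def IsRearr {n : ℕ} (w r : Fin n → ℕ) : Prop :=
  ∃ σ : Equiv.Perm (Fin n), wact σ w = r

/-- The type of rearrangements of a word `w`. -/
abbrev Rearr {n : ℕ} (w : Fin n → ℕ) : Type :=
  {r : Fin n → ℕ // IsRearr w r}

theorem wact_wact {n : ℕ} (σ τ : Equiv.Perm (Fin n)) (w : Fin n → ℕ) :
    wact σ (wact τ w) = wact (σ * τ) w := rfl

/-- The action of a permutation on the type of rearrangements of `w`. -/
def ract {n : ℕ} {w : Fin n → ℕ} (σ : Equiv.Perm (Fin n)) (r : Rearr w) : Rearr w :=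
  ⟨wact σ r.1, by
    obtain ⟨τ, hτ⟩ := r.2
    exact ⟨σ * τ, by rw [← hτ, wact_wact]⟩⟩

instance {n : ℕ} (w : Fin n → ℕ) : Finite (Rearr w) :=
  Finite.of_surjective (fun σ : Equiv.Perm (Fin n) => (⟨wact σ w, σ, rfl⟩ : Rearr w))
    (fun r => by obtain ⟨r, σ, hσ⟩ := r; exact ⟨σ, Subtype.ext hσ⟩)

noncomputable instance {n : ℕ} (w : Fin n → ℕ) : Fintype (Rearr w) :=
  Fintype.ofFinite _

/-- Young's character `Y(r1, r2) = Σ sign σ` over all `σ` with `σ·w1 = r1` and `σ·w2 = r2`. -/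
def youngChar {n : ℕ} (w1 w2 : Fin n → ℕ) (r1 r2 : Fin n → ℕ) : ℤ :=
  ∑ σ : Equiv.Perm (Fin n),
    if wact σ w1 = r1 ∧ wact σ w2 = r2 then (Equiv.Perm.sign σ : ℤ) else 0

/-- A pair of words has trivial (diagonal) stabilizer. -/
def FreePair {n : ℕ} (p : (Fin n → ℕ) × (Fin n → ℕ)) : Prop :=
  ∀ σ : Equiv.Perm (Fin n), wact σ p.1 = p.1 → wact σ p.2 = p.2 → σ = 1

/-- The diagonal action on `R(w1) × R(w2)` has exactly one free orbit. -/
def HaveComplRearr {n : ℕ} (w1 w2 : Fin n → ℕ) : Prop :=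
  (∃ p : (Fin n → ℕ) × (Fin n → ℕ), IsRearr w1 p.1 ∧ IsRearr w2 p.2 ∧ FreePair p) ∧
  ∀ p q : (Fin n → ℕ) × (Fin n → ℕ),
    IsRearr w1 p.1 → IsRearr w2 p.2 → FreePair p →
    IsRearr w1 q.1 → IsRearr w2 q.2 → FreePair q →
    ∃ σ : Equiv.Perm (Fin n), wact σ p.1 = q.1 ∧ wact σ p.2 = q.2

/-- `w1, w2` are complementary: there is a unique free orbit and `(w1, w2)` lies in it. -/
def Complementary {n : ℕ} (w1 w2 : Fin n → ℕ) : Prop :=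
  HaveComplRearr w1 w2 ∧ FreePair (w1, w2)

/-- A column of the Specht matrix, as a complex vector indexed by `R(w1)`. -/
noncomputable def spechtCol {n : ℕ} (w1 w2 : Fin n → ℕ) (r2 : Rearr w2) : Rearr w1 → ℂ :=
  fun r1 => (youngChar w1 w2 r1.1 r2.1 : ℂ)

/-- The Specht module: the span of the columns of the Specht matrix. -/
noncomputable def SpechtModule {n : ℕ} (w1 w2 : Fin n → ℕ) : Submodule ℂ (Rearr w1 → ℂ) :=
  Submodule.span ℂ (Set.range (spechtCol w1 w2))

/-- A column of the real Specht matrix. -/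
noncomputable def spechtColR {n : ℕ} (w1 w2 : Fin n → ℕ) (r2 : Rearr w2) : Rearr w1 → ℝ :=
  fun r1 => (youngChar w1 w2 r1.1 r2.1 : ℝ)

/-- The Specht polytope: the convex hull of the columns of the real Specht matrix. -/
noncomputable def SpechtPolytope {n : ℕ} (w1 w2 : Fin n → ℕ) : Set (Rearr w1 → ℝ) :=
  convexHull ℝ (Set.range (spechtColR w1 w2))

/-- The `S_n`-action on complex-valued functions on `R(w)`: `(σ·f)(r) = f(σ⁻¹·r)`. -/
def factC {n : ℕ} {w : Fin n → ℕ} (σ : Equiv.Perm (Fin n)) (f : Rearr w → ℂ) :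
    Rearr w → ℂ :=
  fun r => f (ract σ⁻¹ r)

/-- A weakly decreasing list of positive integers (a partition shape). -/
def SortedPartList (l : List ℕ) : Prop :=
  l.Pairwise (· ≥ ·) ∧ ∀ x ∈ l, 0 < x

/-- The multiset of letter multiplicities of a word. -/
def multMultiset {n : ℕ} (w : Fin n → ℕ) : Multiset ℕ :=
  (Finset.image w Finset.univ).val.map
    (fun v => (Finset.univ.filter (fun i => w i = v)).card)

/-- The decreasingly sorted letter multiplicities of `w` are given by the list `l`. -/
def HasMultiplicities {n : ℕ} (w : Fin n → ℕ) (l : List ℕ) : Prop :=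
  SortedPartList l ∧ (l : Multiset ℕ) = multMultiset w

/-- The conjugate partition, as a list: `λ*_i = #{k : λ_k ≥ i}`. -/
def conjList (l : List ℕ) : List ℕ :=
  (List.range (l.getD 0 0)).map (fun j => (l.filter (fun x => j + 1 ≤ x)).length)

/-- The complementary pair `(w1, w2)` corresponds to the partition `l`. -/
def CorrespondsTo {n : ℕ} (w1 w2 : Fin n → ℕ) (l : List ℕ) : Prop :=
  HasMultiplicities w1 l ∧ HasMultiplicities w2 (conjList l)

/-- `T` intertwines the `S_n`-actions up to sign: `T(σ·f) = sign(σ) · (σ·(T f))`. -/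
def IsSignEquivariant {n : ℕ} (w1 w2 : Fin n → ℕ)
    (T : (Rearr w2 → ℂ) →ₗ[ℂ] (Rearr w1 → ℂ)) : Prop :=
  ∀ (σ : Equiv.Perm (Fin n)) (f : Rearr w2 → ℂ),
    T (factC σ f) = ((Equiv.Perm.sign σ : ℤ) : ℂ) • factC σ (T f)

namespace SpechtAux2

open Equiv Finset

variable {n : ℕ}

lemma wact_one (w : Fin n → ℕ) : wact 1 w = w := rfl

lemma wact_injective (σ : Equiv.Perm (Fin n)) :
    Function.Injective (wact (n := n) σ) := by
  intro a b hab
  have := congrArg (wact σ⁻¹) hab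
  rwa [wact_wact, wact_wact, inv_mul_cancel, wact_one, wact_one] at this

lemma wact_cancel (σ : Equiv.Perm (Fin n)) (a : Fin n → ℕ) : wact σ (wact σ⁻¹ a) = a := by
  rw [wact_wact, mul_inv_cancel, wact_one]

lemma wact_cancel' (σ : Equiv.Perm (Fin n)) (a : Fin n → ℕ) : wact σ⁻¹ (wact σ a) = a := by
  rw [wact_wact, inv_mul_cancel, wact_one]

lemma ract_ract {w : Fin n → ℕ} (σ τ : Equiv.Perm (Fin n)) (r : Rearr w) :
    ract σ (ract τ r) = ract (σ * τ) r := Subtype.ext (wact_wact σ τ r.1)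

lemma ract_one {w : Fin n → ℕ} (r : Rearr w) : ract 1 r = r := Subtype.ext rfl

lemma ract_inv_ract {w : Fin n → ℕ} (σ : Equiv.Perm (Fin n)) (r : Rearr w) :
    ract σ (ract σ⁻¹ r) = r := by rw [ract_ract, mul_inv_cancel, ract_one]

lemma ract_inv_ract' {w : Fin n → ℕ} (σ : Equiv.Perm (Fin n)) (r : Rearr w) :
    ract σ⁻¹ (ract σ r) = r := by rw [ract_ract, inv_mul_cancel, ract_one]

/-- `ract σ` as an equivalence. -/
def ractEquiv {w : Fin n → ℕ} (σ : Equiv.Perm (Fin n)) : Rearr w ≃ Rearr w where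
  toFun := ract σ
  invFun := ract σ⁻¹
  left_inv r := ract_inv_ract' σ r
  right_inv r := ract_inv_ract σ r

/-- The sign of a permutation as a complex number. -/
def sgn (σ : Equiv.Perm (Fin n)) : ℂ := ((Equiv.Perm.sign σ : ℤ) : ℂ)

lemma sgn_one : sgn (1 : Equiv.Perm (Fin n)) = 1 := by simp [sgn]

lemma sgn_mul (σ τ : Equiv.Perm (Fin n)) : sgn (σ * τ) = sgn σ * sgn τ := by
  simp [sgn]

lemma sgn_mul_self (σ : Equiv.Perm (Fin n)) : sgn σ * sgn σ = 1 := by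
  rcases Int.units_eq_one_or (Equiv.Perm.sign σ) with h | h <;> simp [sgn, h]

lemma factC_factC {w : Fin n → ℕ} (σ τ : Equiv.Perm (Fin n)) (f : Rearr w → ℂ) :
    factC σ (factC τ f) = factC (σ * τ) f := by
  funext r
  simp only [factC]
  rw [ract_ract, ← mul_inv_rev]

lemma factC_one {w : Fin n → ℕ} (f : Rearr w → ℂ) : factC 1 f = f := by
  funext r; simp only [factC, inv_one, ract_one]

/-- `factC σ` as a linear map. -/
def factLin {w : Fin n → ℕ} (σ : Equiv.Perm (Fin n)) :
    (Rearr w → ℂ) →ₗ[ℂ] (Rearr w → ℂ) where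
  toFun := factC σ
  map_add' _ _ := rfl
  map_smul' _ _ := rfl

@[simp] lemma factLin_apply {w : Fin n → ℕ} (σ : Equiv.Perm (Fin n)) (f : Rearr w → ℂ) :
    factLin σ f = factC σ f := rfl

lemma youngChar_equivariant (σ : Equiv.Perm (Fin n)) (w1 w2 r1 r2 : Fin n → ℕ) :
    (youngChar w1 w2 (wact σ r1) (wact σ r2) : ℂ) = sgn σ * (youngChar w1 w2 r1 r2 : ℂ) := by
  unfold youngChar
  push_cast
  rw [Finset.mul_sum]
  apply Fintype.sum_equiv (Equiv.mulLeft σ⁻¹)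
  intro τ
  have h1 : wact (σ⁻¹ * τ) w1 = r1 ↔ wact τ w1 = wact σ r1 := by
    rw [← wact_wact]
    constructor
    · intro hh; rw [← hh, wact_cancel]
    · intro hh; rw [hh, wact_cancel']
  have h2 : wact (σ⁻¹ * τ) w2 = r2 ↔ wact τ w2 = wact σ r2 := by
    rw [← wact_wact]
    constructor
    · intro hh; rw [← hh, wact_cancel]
    · intro hh; rw [hh, wact_cancel']
  simp only [Equiv.coe_mulLeft]
  rw [if_congr (and_congr h1 h2).symm rfl rfl]
  by_cases hc : wact (σ⁻¹ * τ) w1 = r1 ∧ wact (σ⁻¹ * τ) w2 = r2 <;>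
    · rcases Int.units_eq_one_or (Equiv.Perm.sign σ) with h | h <;>
        rcases Int.units_eq_one_or (Equiv.Perm.sign τ) with h' | h' <;>
          simp [sgn, h, h', hc]

lemma youngChar_self {w1 w2 : Fin n → ℕ} (hfree : FreePair (w1, w2)) :
    youngChar w1 w2 w1 w2 = 1 := by
  unfold youngChar
  have : ∀ σ : Equiv.Perm (Fin n),
      (if wact σ w1 = w1 ∧ wact σ w2 = w2 then (Equiv.Perm.sign σ : ℤ) else 0)
        = if σ = 1 then 1 else 0 := by
    intro σ
    by_cases hc : wact σ w1 = w1 ∧ wact σ w2 = w2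
    · have hs : σ = 1 := hfree σ hc.1 hc.2
      subst hs
      rw [if_pos hc, if_pos rfl]
      simp
    · have : σ ≠ 1 := by rintro rfl; exact hc ⟨wact_one w1, wact_one w2⟩
      simp [hc, this]
  rw [Finset.sum_congr rfl (fun σ _ => this σ)]
  simp

lemma youngChar_zero {w1 w2 : Fin n → ℕ} (r1 r2 : Fin n → ℕ)
    (hno : ¬ ∃ σ : Equiv.Perm (Fin n), wact σ w1 = r1 ∧ wact σ w2 = r2) :
    youngChar w1 w2 r1 r2 = 0 := by
  unfold youngChar
  apply Finset.sum_eq_zero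
  intro σ _
  rw [if_neg (fun hc => hno ⟨σ, hc⟩)]

/-- The distinguished base points. -/
def basept (w : Fin n → ℕ) : Rearr w := ⟨w, 1, wact_one w⟩

/-- The Young-character linear map. -/
noncomputable def T0 (w1 w2 : Fin n → ℕ) : (Rearr w2 → ℂ) →ₗ[ℂ] (Rearr w1 → ℂ) where
  toFun f r1 := ∑ r2 : Rearr w2, (youngChar w1 w2 r1.1 r2.1 : ℂ) * f r2
  map_add' f g := by
    funext r1
    simp [mul_add, Finset.sum_add_distrib]
  map_smul' c f := by
    funext r1
    simp [Finset.mul_sum, mul_left_comm]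

lemma T0_apply (w1 w2 : Fin n → ℕ) (f : Rearr w2 → ℂ) (r1 : Rearr w1) :
    T0 w1 w2 f r1 = ∑ r2 : Rearr w2, (youngChar w1 w2 r1.1 r2.1 : ℂ) * f r2 := rfl

lemma T0_signEquivariant (w1 w2 : Fin n → ℕ) : IsSignEquivariant w1 w2 (T0 w1 w2) := by
  intro σ f
  funext r1
  simp only [T0_apply, Pi.smul_apply, factC, smul_eq_mul]
  rw [show ((Equiv.Perm.sign σ : ℤ) : ℂ) = sgn σ from rfl]
  rw [Finset.mul_sum]
  apply Fintype.sum_equiv (ractEquiv (w := w2) σ⁻¹)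
  intro r2
  have he : (ractEquiv (w := w2) σ⁻¹ r2) = ract σ⁻¹ r2 := rfl
  rw [he]
  have h1 : (youngChar w1 w2 r1.1 r2.1 : ℂ)
      = sgn σ * (youngChar w1 w2 (ract σ⁻¹ r1).1 (ract σ⁻¹ r2).1 : ℂ) := by
    have := youngChar_equivariant σ w1 w2 (ract σ⁻¹ r1).1 (ract σ⁻¹ r2).1
    have e1 : wact σ (ract σ⁻¹ r1).1 = r1.1 := congrArg Subtype.val (ract_inv_ract σ r1)
    have e2 : wact σ (ract σ⁻¹ r2).1 = r2.1 := congrArg Subtype.val (ract_inv_ract σ r2)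
    rw [e1, e2] at this
    exact this
  rw [h1]
  ring

/-- Delta function at a rearrangement. -/
def dlt {w : Fin n → ℕ} (r0 : Rearr w) : Rearr w → ℂ := fun j => if r0 = j then 1 else 0

lemma factC_dlt {w : Fin n → ℕ} (σ : Equiv.Perm (Fin n)) (r0 : Rearr w) :
    factC σ (dlt r0) = dlt (ract σ r0) := by
  funext r
  simp only [factC, dlt]
  have : (r0 = ract σ⁻¹ r) ↔ (ract σ r0 = r) :=
    ⟨fun e => by rw [e, ract_inv_ract], fun e => by rw [← e, ract_inv_ract']⟩
  rw [if_congr this rfl rfl]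

lemma T0_dlt (w1 w2 : Fin n → ℕ) (r2 : Rearr w2) (r1 : Rearr w1) :
    T0 w1 w2 (dlt r2) r1 = (youngChar w1 w2 r1.1 r2.1 : ℂ) := by
  rw [T0_apply]
  simp [dlt, mul_ite]

lemma T0_ne_zero {w1 w2 : Fin n → ℕ} (hfree : FreePair (w1, w2)) : T0 w1 w2 ≠ 0 := by
  intro hz
  have : T0 w1 w2 (dlt (basept w2)) (basept w1) = 0 := by rw [hz]; rfl
  rw [T0_dlt] at this
  have : (youngChar w1 w2 w1 w2 : ℂ) = 0 := this
  rw [youngChar_self hfree] at this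
  norm_num at this

/-- An element with sign `-1` stabilizing a non-free pair coming from rearrangements. -/
lemma exists_odd_stab (w1 w2 : Fin n → ℕ) (h : Complementary w1 w2)
    (r1 : Rearr w1) (r2 : Rearr w2)
    (hno : ¬ ∃ σ : Equiv.Perm (Fin n), wact σ w1 = r1.1 ∧ wact σ w2 = r2.1) :
    ∃ τ : Equiv.Perm (Fin n), sgn τ = -1 ∧ wact τ r1.1 = r1.1 ∧ wact τ r2.1 = r2.1 := by
  have hnf : ¬ FreePair (r1.1, r2.1) := fun hf =>
    hno (h.1.2 (w1, w2) (r1.1, r2.1) ⟨1, wact_one w1⟩ ⟨1, wact_one w2⟩ h.2 r1.2 r2.2 hf)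
  unfold FreePair at hnf
  push_neg at hnf
  obtain ⟨σ, hσ1, hσ2, hσne⟩ := hnf
  have : ∃ i : Fin n, σ i ≠ i := by
    by_contra hc
    push_neg at hc
    exact hσne (Equiv.ext hc)
  obtain ⟨i, hi⟩ := this
  refine ⟨Equiv.swap i (σ i), ?_, ?_, ?_⟩
  · simp [sgn, Equiv.Perm.sign_swap (Ne.symm hi)]
  · -- wact (swap i (σ i)) r1.1 = r1.1
    have key : r1.1 i = r1.1 (σ i) := by
      have := congrFun hσ1 (σ i)
      simpa [wact] using this
    funext j
    simp only [wact, Function.comp_apply, Equiv.symm_swap]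
    rcases eq_or_ne j i with rfl | hji
    · rw [Equiv.swap_apply_left]; exact key.symm
    · rcases eq_or_ne j (σ i) with rfl | hjs
      · rw [Equiv.swap_apply_right]; exact key
      · rw [Equiv.swap_apply_of_ne_of_ne hji hjs]
  · have key : r2.1 i = r2.1 (σ i) := by
      have := congrFun hσ2 (σ i)
      simpa [wact] using this
    funext j
    simp only [wact, Function.comp_apply, Equiv.symm_swap]
    rcases eq_or_ne j i with rfl | hji
    · rw [Equiv.swap_apply_left]; exact key.symm
    · rcases eq_or_ne j (σ i) with rfl | hjs
      · rw [Equiv.swap_apply_right]; exact key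
      · rw [Equiv.swap_apply_of_ne_of_ne hji hjs]

/-- Every sign-equivariant map is a multiple of `T0`. -/
lemma T_eq_smul_T0 {w1 w2 : Fin n → ℕ} (h : Complementary w1 w2)
    (T : (Rearr w2 → ℂ) →ₗ[ℂ] (Rearr w1 → ℂ)) (hT : IsSignEquivariant w1 w2 T) :
    T = (T (dlt (basept w2)) (basept w1)) • T0 w1 w2 := by
  classical
  set c : ℂ := T (dlt (basept w2)) (basept w1) with hc
  -- equivariance of the kernel
  have hK : ∀ (σ : Equiv.Perm (Fin n)) (r1 : Rearr w1) (r2 : Rearr w2),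
      T (dlt (ract σ r2)) r1 = sgn σ * T (dlt r2) (ract σ⁻¹ r1) := by
    intro σ r1 r2
    have := hT σ (dlt r2)
    rw [factC_dlt] at this
    have := congrFun this r1
    simpa [factC, sgn] using this
  -- main pointwise claim
  have main : ∀ (r1 : Rearr w1) (r2 : Rearr w2),
      T (dlt r2) r1 = c * (youngChar w1 w2 r1.1 r2.1 : ℂ) := by
    intro r1 r2
    by_cases hex : ∃ σ : Equiv.Perm (Fin n), wact σ w1 = r1.1 ∧ wact σ w2 = r2.1
    · obtain ⟨σ, hσ1, hσ2⟩ := hex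
      have e1 : r1 = ract σ (basept w1) := Subtype.ext hσ1.symm
      have e2 : r2 = ract σ (basept w2) := Subtype.ext hσ2.symm
      have hy : (youngChar w1 w2 r1.1 r2.1 : ℂ) = sgn σ := by
        rw [← hσ1, ← hσ2, youngChar_equivariant, youngChar_self h.2]
        simp
      rw [hy, e1, e2, hK σ (ract σ (basept w1)) (basept w2), ract_inv_ract']
      ring
    · have hy : (youngChar w1 w2 r1.1 r2.1 : ℂ) = 0 := by
        rw [youngChar_zero r1.1 r2.1 hex]; norm_num
      rw [hy, mul_zero]
      obtain ⟨τ, hτs, hτ1, hτ2⟩ := exists_odd_stab w1 w2 h r1 r2 hex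
      have e2 : ract τ r2 = r2 := Subtype.ext hτ2
      have e1 : ract τ⁻¹ r1 = r1 := by
        have : ract τ r1 = r1 := Subtype.ext hτ1
        conv_lhs => rw [← this]
        rw [ract_inv_ract']
      have := hK τ r1 r2
      rw [e2, e1, hτs] at this
      linear_combination (1 / 2 : ℂ) * this
  -- conclude
  apply LinearMap.ext
  intro f
  have hf : f = ∑ r2 : Rearr w2, f r2 • dlt r2 := by
    have := pi_eq_sum_univ f
    convert this using 2
    unfold dlt; congr
  funext r1
  conv_lhs => rw [hf]
  rw [map_sum]
  simp only [map_smul, Finset.sum_apply, Pi.smul_apply, smul_eq_mul]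
  simp only [main, LinearMap.smul_apply, Pi.smul_apply, smul_eq_mul, T0_apply,
    Finset.mul_sum]
  apply Finset.sum_congr rfl
  intro r2 _
  ring


lemma uniq {w1 w2 : Fin n → ℕ} (h : Complementary w1 w2)
    (T T' : (Rearr w2 → ℂ) →ₗ[ℂ] (Rearr w1 → ℂ))
    (hT : IsSignEquivariant w1 w2 T) (hTne : T ≠ 0)
    (hT' : IsSignEquivariant w1 w2 T') : ∃ c : ℂ, T' = c • T := by
  have e1 := T_eq_smul_T0 h T hT
  have e2 := T_eq_smul_T0 h T' hT'
  set a : ℂ := T (dlt (basept w2)) (basept w1) with ha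
  set b : ℂ := T' (dlt (basept w2)) (basept w1) with hb
  have hane : a ≠ 0 := by
    intro h0
    apply hTne
    rw [e1, h0, zero_smul]
  refine ⟨b / a, ?_⟩
  rw [e2, e1, smul_smul, div_mul_cancel₀ _ hane]

lemma range_inv {w1 w2 : Fin n → ℕ} (T : (Rearr w2 → ℂ) →ₗ[ℂ] (Rearr w1 → ℂ))
    (hT : IsSignEquivariant w1 w2 T) (σ : Equiv.Perm (Fin n)) (f : Rearr w1 → ℂ)
    (hf : f ∈ LinearMap.range T) : factC σ f ∈ LinearMap.range T := by
  obtain ⟨g, rfl⟩ := hf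
  refine ⟨sgn σ • factC σ g, ?_⟩
  rw [map_smul, hT σ g, smul_smul,
    show sgn σ * ((Equiv.Perm.sign σ : ℤ) : ℂ) = 1 from sgn_mul_self σ, one_smul]

lemma irred {w1 w2 : Fin n → ℕ} (h : Complementary w1 w2)
    (T : (Rearr w2 → ℂ) →ₗ[ℂ] (Rearr w1 → ℂ))
    (hT : IsSignEquivariant w1 w2 T) (hTne : T ≠ 0)
    (U : Submodule ℂ (Rearr w1 → ℂ)) (hle : U ≤ LinearMap.range T)
    (hinv : ∀ σ : Equiv.Perm (Fin n), ∀ f ∈ U, factC σ f ∈ U) (hUne : U ≠ ⊥) :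
    U = LinearMap.range T := by
  classical
  obtain ⟨U', hcompl⟩ := Submodule.exists_isCompl U
  set q : (Rearr w1 → ℂ) →ₗ[ℂ] (Rearr w1 → ℂ) :=
    U.subtype.comp (U.projectionOnto U' hcompl) with hq
  have hqmem : ∀ x, q x ∈ U := fun x => (U.projectionOnto U' hcompl x).2
  have hqU : ∀ u ∈ U, q u = u := by
    intro u hu
    have := Submodule.linearProjOfIsCompl_apply_left hcompl ⟨u, hu⟩
    simp only [hq, LinearMap.comp_apply, Submodule.subtype_apply]
    rw [show u = ((⟨u, hu⟩ : U) : Rearr w1 → ℂ) from rfl, this]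
  set N : ℂ := (Fintype.card (Equiv.Perm (Fin n)) : ℂ) with hNdef
  have hN : N ≠ 0 := by
    simp only [hNdef, Ne, Nat.cast_eq_zero]
    exact Fintype.card_ne_zero
  set π : (Rearr w1 → ℂ) →ₗ[ℂ] (Rearr w1 → ℂ) :=
    N⁻¹ • ∑ σ : Equiv.Perm (Fin n), (factLin σ).comp (q.comp (factLin σ⁻¹)) with hπ
  have hπ_apply : ∀ x, π x = N⁻¹ • ∑ σ : Equiv.Perm (Fin n), factC σ (q (factC σ⁻¹ x)) := by
    intro x
    simp [hπ, LinearMap.sum_apply]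
  have hπmem : ∀ x, π x ∈ U := by
    intro x
    rw [hπ_apply]
    exact Submodule.smul_mem _ _ (Submodule.sum_mem _ fun σ _ => hinv σ _ (hqmem _))
  have hπU : ∀ u ∈ U, π u = u := by
    intro u hu
    rw [hπ_apply]
    have hterm : ∀ σ : Equiv.Perm (Fin n), factC σ (q (factC σ⁻¹ u)) = u := by
      intro σ
      rw [hqU _ (hinv σ⁻¹ u hu), factC_factC, mul_inv_cancel, factC_one]
    rw [Finset.sum_congr rfl (fun σ _ => hterm σ), Finset.sum_const, Finset.card_univ,
      ← Nat.cast_smul_eq_nsmul ℂ, smul_smul, ← hNdef, inv_mul_cancel₀ hN, one_smul]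
  have hπcomm : ∀ (τ : Equiv.Perm (Fin n)) x, π (factC τ x) = factC τ (π x) := by
    intro τ x
    rw [hπ_apply, hπ_apply]
    have hlin : factC τ (N⁻¹ • ∑ σ : Equiv.Perm (Fin n), factC σ (q (factC σ⁻¹ x)))
        = N⁻¹ • ∑ σ : Equiv.Perm (Fin n), factC τ (factC σ (q (factC σ⁻¹ x))) := by
      rw [← factLin_apply, map_smul, map_sum]
      simp
    rw [hlin]
    congr 1
    apply Fintype.sum_equiv (Equiv.mulLeft τ⁻¹)
    intro σ
    simp only [Equiv.coe_mulLeft]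
    rw [factC_factC σ⁻¹ τ, factC_factC τ (τ⁻¹ * σ), mul_inv_rev, inv_inv,
      mul_inv_cancel_left]
  have hsign : IsSignEquivariant w1 w2 (π.comp T) := by
    intro σ f
    simp only [LinearMap.comp_apply]
    rw [hT σ f, map_smul, hπcomm]
  obtain ⟨c, hc⟩ := uniq h T (π.comp T) hT hTne hsign
  obtain ⟨u, huU, hune⟩ := Submodule.exists_mem_ne_zero_of_ne_bot hUne
  obtain ⟨g, hg⟩ := hle huU
  have h2 : ∀ y, π (T y) = c • T y := by
    intro y
    exact congrArg (fun (L : (Rearr w2 → ℂ) →ₗ[ℂ] (Rearr w1 → ℂ)) => L y) hc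
  have hc1 : c = 1 := by
    have hcu : u = c • u := by
      conv_lhs => rw [← hg, ← hπU (T g) (hg ▸ huU)]
      rw [h2, hg]
    have : (c - 1) • u = 0 := by rw [sub_smul, one_smul, ← hcu, sub_self]
    rcases smul_eq_zero.mp this with h0 | h0
    · exact sub_eq_zero.mp h0
    · exact absurd h0 hune
  apply le_antisymm hle
  rintro x ⟨g', rfl⟩
  have : π (T g') = T g' := by rw [h2, hc1, one_smul]
  rw [← this]
  exact hπmem _


end SpechtAux2


/-- For complementary words `w1, w2`, the space of linear maps
`T : ℂ^{R(w2)} → ℂ^{R(w1)}` with `T(σ·f) = sign(σ)·(σ·(T f))` is exactly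
one-dimensional, and the image of any nonzero such `T` is a nonzero `S_n`-invariant
subspace whose only invariant subspaces are `0` and itself. -/
theorem specht_stmt_2 {n : ℕ} (w1 w2 : Fin n → ℕ) (h : Complementary w1 w2) :
    (∃ T : (Rearr w2 → ℂ) →ₗ[ℂ] (Rearr w1 → ℂ), T ≠ 0 ∧ IsSignEquivariant w1 w2 T) ∧
    (∀ T T' : (Rearr w2 → ℂ) →ₗ[ℂ] (Rearr w1 → ℂ),
      IsSignEquivariant w1 w2 T → T ≠ 0 → IsSignEquivariant w1 w2 T' →
      ∃ c : ℂ, T' = c • T) ∧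
    (∀ T : (Rearr w2 → ℂ) →ₗ[ℂ] (Rearr w1 → ℂ),
      IsSignEquivariant w1 w2 T → T ≠ 0 →
      LinearMap.range T ≠ ⊥ ∧
      (∀ σ : Equiv.Perm (Fin n), ∀ f ∈ LinearMap.range T, factC σ f ∈ LinearMap.range T) ∧
      ∀ U : Submodule ℂ (Rearr w1 → ℂ), U ≤ LinearMap.range T →
        (∀ σ : Equiv.Perm (Fin n), ∀ f ∈ U, factC σ f ∈ U) →
        U = ⊥ ∨ U = LinearMap.range T) := by
  refine ⟨⟨SpechtAux2.T0 w1 w2, SpechtAux2.T0_ne_zero h.2, SpechtAux2.T0_signEquivariant w1 w2⟩,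
    fun T T' hT hTne hT' => SpechtAux2.uniq h T T' hT hTne hT', ?_⟩
  intro T hT hTne
  refine ⟨fun hbot => hTne (LinearMap.range_eq_bot.mp hbot),
    fun σ f hf => SpechtAux2.range_inv T hT σ f hf, ?_⟩
  intro U hle hinv
  by_cases hU : U = ⊥
  · exact Or.inl hU
  · exact Or.inr (SpechtAux2.irred h T hT hTne U hle hinv hU)
end

section
/- Let w1, w2 be words of length n. Then Young's character satisfies Y(r1, r2) ∈ {−1, 0, 1} for all r1 ∈ R(w1) and r2 ∈ R(w2); if there exist distinct positions i, j ∈ Fin n with r1(i) = r1(j) and r2(i) = r2(j) (a repeated column), then Y(r1, r2) = 0. If moreover w1 and w2 are complementary, then Y(r1, r2) ≠ 0 if and only if the pairs (r1(i), r2(i)) for i ∈ Fin n are pairwise distinct. -/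
lemma wact_one {n : ℕ} (w : Fin n → ℕ) : wact 1 w = w := rfl

/-- Vanishing via an odd joint stabilizer of `(w1, w2)` (right multiplication). -/
lemma young_zero_right {n : ℕ} (w1 w2 r1 r2 : Fin n → ℕ) (τ : Equiv.Perm (Fin n))
    (hs : Equiv.Perm.sign τ = -1) (h1 : wact τ w1 = w1) (h2 : wact τ w2 = w2) :
    youngChar w1 w2 r1 r2 = 0 := by
  have key : youngChar w1 w2 r1 r2 = - youngChar w1 w2 r1 r2 := by
    unfold youngChar
    rw [← Finset.sum_neg_distrib]
    refine Fintype.sum_equiv (Equiv.mulRight τ) _ _ (fun σ => ?_)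
    simp only [Equiv.coe_mulRight]
    simp only [← wact_wact σ τ w1, ← wact_wact σ τ w2, h1, h2, map_mul, hs]
    split_ifs <;> simp
  linarith

/-- Vanishing via an odd joint stabilizer of `(r1, r2)` (left multiplication). -/
lemma young_zero_left {n : ℕ} (w1 w2 r1 r2 : Fin n → ℕ) (τ : Equiv.Perm (Fin n))
    (hs : Equiv.Perm.sign τ = -1) (h1 : wact τ r1 = r1) (h2 : wact τ r2 = r2) :
    youngChar w1 w2 r1 r2 = 0 := by
  have hiff : ∀ (w r : Fin n → ℕ), wact τ r = r → ∀ σ : Equiv.Perm (Fin n),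
      (wact (τ * σ) w = r ↔ wact σ w = r) := by
    intro w r hr σ
    constructor
    · intro h
      have := congrArg (wact τ⁻¹) h
      rw [wact_wact, inv_mul_cancel_left] at this
      rw [this]
      have := congrArg (wact τ⁻¹) hr
      rw [wact_wact, inv_mul_cancel, wact_one] at this
      exact this.symm
    · intro h
      rw [← wact_wact, h, hr]
  have key : youngChar w1 w2 r1 r2 = - youngChar w1 w2 r1 r2 := by
    unfold youngChar
    rw [← Finset.sum_neg_distrib]
    refine Fintype.sum_equiv (Equiv.mulLeft τ) _ _ (fun σ => ?_)
    simp only [Equiv.coe_mulLeft]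
    simp only [hiff w1 r1 h1 σ, hiff w2 r2 h2 σ]
    rw [map_mul, hs]
    split_ifs <;> simp
  linarith

/-- Vanishing when a column of `(r1, r2)` repeats. -/
lemma young_zero_of_repeat {n : ℕ} (w1 w2 r1 r2 : Fin n → ℕ) {i j : Fin n}
    (hij : i ≠ j) (hr1 : r1 i = r1 j) (hr2 : r2 i = r2 j) :
    youngChar w1 w2 r1 r2 = 0 := by
  have fix : ∀ (r : Fin n → ℕ), r i = r j → wact (Equiv.swap i j) r = r := by
    intro r hr
    funext x
    show r ((Equiv.swap i j).symm x) = r x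
    rw [Equiv.symm_swap, Equiv.swap_apply_def]
    split_ifs with hx hx'
    · rw [hx, ← hr]
    · rw [hx', hr]
    · rfl
  exact young_zero_left w1 w2 r1 r2 (Equiv.swap i j)
    (Equiv.Perm.sign_swap hij) (fix r1 hr1) (fix r2 hr2)

/-- If the joint stabilizer of `(w1, w2)` is trivial and `σ0` carries `(w1, w2)` to
`(r1, r2)`, then Young's character equals `sign σ0`. -/
lemma young_eq_sign {n : ℕ} (w1 w2 r1 r2 : Fin n → ℕ) (σ0 : Equiv.Perm (Fin n))
    (h01 : wact σ0 w1 = r1) (h02 : wact σ0 w2 = r2)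
    (hst : ∀ τ : Equiv.Perm (Fin n), wact τ w1 = w1 → wact τ w2 = w2 → τ = 1) :
    youngChar w1 w2 r1 r2 = Equiv.Perm.sign σ0 := by
  have hP : ∀ σ : Equiv.Perm (Fin n), (wact σ w1 = r1 ∧ wact σ w2 = r2) ↔ σ = σ0 := by
    intro σ
    constructor
    · rintro ⟨ha, hb⟩
      have key : ∀ (w r : Fin n → ℕ), wact σ w = r → wact σ0 w = r →
          wact (σ0⁻¹ * σ) w = w := by
        intro w r hs hs0
        rw [← wact_wact, hs, ← hs0, wact_wact, inv_mul_cancel, wact_one]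
      have := hst (σ0⁻¹ * σ) (key w1 r1 ha h01) (key w2 r2 hb h02)
      rwa [inv_mul_eq_one, eq_comm] at this
    · rintro rfl; exact ⟨h01, h02⟩
  unfold youngChar
  calc ∑ σ : Equiv.Perm (Fin n),
        (if wact σ w1 = r1 ∧ wact σ w2 = r2 then (Equiv.Perm.sign σ : ℤ) else 0)
      = ∑ σ : Equiv.Perm (Fin n), (if σ = σ0 then (Equiv.Perm.sign σ : ℤ) else 0) := by
        refine Finset.sum_congr rfl (fun σ _ => ?_)
        exact if_congr (hP σ) rfl rfl
    _ = Equiv.Perm.sign σ0 := by simp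

/-- Young's character takes values in `{-1, 0, 1}`; it vanishes on pairs
with a repeated column; and for complementary words it is nonzero exactly when all
columns are distinct. -/
theorem specht_stmt_3 {n : ℕ} (w1 w2 : Fin n → ℕ) (r1 r2 : Fin n → ℕ)
    (h1 : IsRearr w1 r1) (h2 : IsRearr w2 r2) :
    youngChar w1 w2 r1 r2 ∈ ({-1, 0, 1} : Set ℤ) ∧
    ((∃ i j : Fin n, i ≠ j ∧ r1 i = r1 j ∧ r2 i = r2 j) → youngChar w1 w2 r1 r2 = 0) ∧
    (Complementary w1 w2 →
      (youngChar w1 w2 r1 r2 ≠ 0 ↔ Function.Injective fun i => (r1 i, r2 i))) := by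
  have part2 : (∃ i j : Fin n, i ≠ j ∧ r1 i = r1 j ∧ r2 i = r2 j) →
      youngChar w1 w2 r1 r2 = 0 := by
    rintro ⟨i, j, hij, ha, hb⟩
    exact young_zero_of_repeat w1 w2 r1 r2 hij ha hb
  have part1 : youngChar w1 w2 r1 r2 ∈ ({-1, 0, 1} : Set ℤ) := by
    by_cases hS : ∃ σ : Equiv.Perm (Fin n), wact σ w1 = r1 ∧ wact σ w2 = r2
    · obtain ⟨σ0, h01, h02⟩ := hS
      by_cases hstab : ∀ τ : Equiv.Perm (Fin n), wact τ w1 = w1 → wact τ w2 = w2 → τ = 1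
      · rw [young_eq_sign w1 w2 r1 r2 σ0 h01 h02 hstab]
        rcases Int.units_eq_one_or (Equiv.Perm.sign σ0) with h | h <;>
          simp [h, Set.mem_insert_iff]
      · push_neg at hstab
        obtain ⟨τ, ht1, ht2, htne⟩ := hstab
        obtain ⟨i, hi⟩ : ∃ i, τ i ≠ i := by
          by_contra hc
          push_neg at hc
          exact htne (Equiv.ext hc)
        have hw : ∀ (w : Fin n → ℕ), wact τ w = w → w i = w (τ i) := by
          intro w hwτ
          have := congrFun hwτ (τ i)
          simpa [wact] using this
        have h0 : youngChar w1 w2 w1 w2 ≠ 0 → True := fun _ => trivial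
        refine Or.inr (Or.inl ?_)
        exact young_zero_right w1 w2 r1 r2 (Equiv.swap i (τ i))
          (Equiv.Perm.sign_swap (Ne.symm hi))
          (by
            funext x
            show w1 ((Equiv.swap i (τ i)).symm x) = w1 x
            rw [Equiv.symm_swap, Equiv.swap_apply_def]
            split_ifs with hx hx'
            · rw [hx]; exact (hw w1 ht1).symm
            · rw [hx']; exact hw w1 ht1
            · rfl)
          (by
            funext x
            show w2 ((Equiv.swap i (τ i)).symm x) = w2 x
            rw [Equiv.symm_swap, Equiv.swap_apply_def]
            split_ifs with hx hx'
            · rw [hx]; exact (hw w2 ht2).symm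
            · rw [hx']; exact hw w2 ht2
            · rfl)
    · push_neg at hS
      refine Or.inr (Or.inl ?_)
      unfold youngChar
      refine Finset.sum_eq_zero (fun σ _ => ?_)
      rw [if_neg]
      rintro ⟨ha, hb⟩
      exact hS σ ha hb
  refine ⟨part1, part2, ?_⟩
  rintro ⟨⟨hex, huniq⟩, hfree⟩
  constructor
  · intro hne
    intro a b hab
    by_contra hab'
    simp only [Prod.mk.injEq] at hab
    exact hne (part2 ⟨a, b, hab', hab.1, hab.2⟩)
  · intro hinj
    have hfree' : FreePair (r1, r2) := by
      intro σ hs1 hs2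
      have : ∀ x, σ⁻¹ x = x := by
        intro x
        exact hinj (by
          show (r1 (σ⁻¹ x), r2 (σ⁻¹ x)) = (r1 x, r2 x)
          have e1 := congrFun hs1 x
          have e2 := congrFun hs2 x
          simp only [wact, Function.comp_apply] at e1 e2
          exact Prod.ext e1 e2)
      have : σ⁻¹ = 1 := Equiv.ext this
      rwa [inv_eq_one] at this
    obtain ⟨σ0, h01, h02⟩ := huniq (w1, w2) (r1, r2) ⟨1, wact_one w1⟩ ⟨1, wact_one w2⟩
      hfree h1 h2 hfree'
    have hst : ∀ τ : Equiv.Perm (Fin n), wact τ w1 = w1 → wact τ w2 = w2 → τ = 1 :=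
      fun τ ha hb => hfree τ ha hb
    rw [young_eq_sign w1 w2 r1 r2 σ0 h01 h02 hst]
    rcases Int.units_eq_one_or (Equiv.Perm.sign σ0) with h | h <;> simp [h]
end

section
/- Let w1, w2 be complementary words of length n. The Specht module V(w1, w2) ⊆ ℂ^{R(w1)} (the span of the columns of the Specht matrix) is a nonzero subspace, it is invariant under the S_n-action (σ·f)(r1) = f(σ⁻¹·r1), and it is irreducible: every S_n-invariant subspace of V(w1, w2) equals 0 or V(w1, w2). -/
/- ====================== auxiliary development ====================== -/

namespace SpechtAux

variable {n : ℕ}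

theorem wact_one (w : Fin n → ℕ) : wact 1 w = w := rfl

theorem wact_inv_eq {σ : Equiv.Perm (Fin n)} {u v : Fin n → ℕ} (h : wact σ u = v) :
    wact σ⁻¹ v = u := by rw [← h, wact_wact]; simp [wact_one]

theorem wact_eq_iff {σ : Equiv.Perm (Fin n)} {u v : Fin n → ℕ} :
    wact σ u = v ↔ u = wact σ⁻¹ v :=
  ⟨fun h => (wact_inv_eq h).symm, fun h => by
    rw [h, wact_wact]; simp [wact_one]⟩

theorem ract_ract {w : Fin n → ℕ} (σ τ : Equiv.Perm (Fin n)) (r : Rearr w) :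
    ract σ (ract τ r) = ract (σ * τ) r := Subtype.ext rfl

theorem ract_one {w : Fin n → ℕ} (r : Rearr w) : ract 1 r = r := Subtype.ext rfl

theorem ract_inv_eq_iff {w : Fin n → ℕ} {σ : Equiv.Perm (Fin n)} {r s : Rearr w} :
    ract σ⁻¹ r = s ↔ wact σ s.1 = r.1 := by
  constructor
  · rintro rfl; exact wact_inv_eq rfl
  · intro h; apply Subtype.ext; exact wact_inv_eq h

/-- complex sign -/
noncomputable def sgn (σ : Equiv.Perm (Fin n)) : ℂ := ((Equiv.Perm.sign σ : ℤ) : ℂ)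

theorem sgn_mul (σ τ : Equiv.Perm (Fin n)) : sgn (σ * τ) = sgn σ * sgn τ := by
  simp [sgn]

theorem sgn_one : sgn (1 : Equiv.Perm (Fin n)) = 1 := by simp [sgn]

theorem sgn_inv (σ : Equiv.Perm (Fin n)) : sgn σ⁻¹ = sgn σ := by simp [sgn]

theorem sgn_sq (σ : Equiv.Perm (Fin n)) : sgn σ * sgn σ = 1 := by
  rcases Int.units_eq_one_or (Equiv.Perm.sign σ) with h | h <;> simp [sgn, h]

theorem conj_sgn (σ : Equiv.Perm (Fin n)) : (starRingEnd ℂ) (sgn σ) = sgn σ := by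
  rcases Int.units_eq_one_or (Equiv.Perm.sign σ) with h | h <;> simp [sgn, h]

/-- hermitian inner product -/
noncomputable def inn {w : Fin n → ℕ} (f g : Rearr w → ℂ) : ℂ :=
  ∑ r : Rearr w, f r * (starRingEnd ℂ) (g r)

/-- `ract σ` as an equivalence. -/
def ractEquiv {w : Fin n → ℕ} (σ : Equiv.Perm (Fin n)) : Rearr w ≃ Rearr w where
  toFun := ract σ
  invFun := ract σ⁻¹
  left_inv r := by rw [ract_ract]; simp [ract_one]
  right_inv r := by rw [ract_ract]; simp [ract_one]

theorem factC_add {w : Fin n → ℕ} (σ : Equiv.Perm (Fin n)) (f g : Rearr w → ℂ) :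
    factC σ (f + g) = factC σ f + factC σ g := rfl

theorem factC_smul {w : Fin n → ℕ} (σ : Equiv.Perm (Fin n)) (c : ℂ) (f : Rearr w → ℂ) :
    factC σ (c • f) = c • factC σ f := rfl

theorem factC_factC {w : Fin n → ℕ} (σ τ : Equiv.Perm (Fin n)) (f : Rearr w → ℂ) :
    factC σ (factC τ f) = factC (σ * τ) f := by
  funext r
  simp only [factC]
  rw [ract_ract, mul_inv_rev]

theorem inn_add {w : Fin n → ℕ} (f g g' : Rearr w → ℂ) :
    inn f (g + g') = inn f g + inn f g' := by
  simp [inn, mul_add, Finset.sum_add_distrib]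

theorem inn_smul {w : Fin n → ℕ} (c : ℂ) (f g : Rearr w → ℂ) :
    inn f (c • g) = (starRingEnd ℂ) c * inn f g := by
  rw [inn, inn, Finset.mul_sum]
  refine Finset.sum_congr rfl (fun i _ => ?_)
  simp only [Pi.smul_apply, smul_eq_mul, map_mul]
  ring

theorem inn_factC {w : Fin n → ℕ} (σ : Equiv.Perm (Fin n)) (f g : Rearr w → ℂ) :
    inn f (factC σ g) = inn (factC σ⁻¹ f) g := by
  simp only [inn, factC]
  refine Fintype.sum_equiv (ractEquiv σ⁻¹) _ _ (fun r => ?_)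
  simp only [ractEquiv, Equiv.coe_fn_mk, inv_inv]
  rw [show ract σ (ract σ⁻¹ r) = r by rw [ract_ract]; simp [ract_one]]

variable (w1 w2 : Fin n → ℕ)

/-- Complex-valued Young character. -/
noncomputable def ychar (r1 r2 : Fin n → ℕ) : ℂ :=
  ∑ σ : Equiv.Perm (Fin n), if wact σ w1 = r1 ∧ wact σ w2 = r2 then sgn σ else 0

theorem spechtCol_eq (r2 : Rearr w2) (r1 : Rearr w1) :
    spechtCol w1 w2 r2 r1 = ychar w1 w2 r1.1 r2.1 := by
  simp only [spechtCol, youngChar, ychar, sgn]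
  push_cast [apply_ite (fun x : ℤ => (x : ℂ))]
  rfl

/-- base points -/
def w1e : Rearr w1 := ⟨w1, 1, rfl⟩
def w2e : Rearr w2 := ⟨w2, 1, rfl⟩

/-- distinguished column -/
noncomputable def vcol : Rearr w1 → ℂ := spechtCol w1 w2 (w2e w2)

/-- the signed column-stabilizer symmetrizer -/
noncomputable def kappa (f : Rearr w1 → ℂ) : Rearr w1 → ℂ :=
  fun r => ∑ σ : Equiv.Perm (Fin n),
    if wact σ w2 = w2 then sgn σ * f (ract σ⁻¹ r) else 0


/- if a swap exchanges positions with equal letters, it fixes the word -/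
theorem wact_swap {u : Fin n → ℕ} {a b : Fin n} (h : u a = u b) :
    wact (Equiv.swap a b) u = u := by
  funext j
  simp only [wact, Function.comp_apply, Equiv.symm_swap, Equiv.swap_apply_def]
  split_ifs with h1 h2 <;> simp_all

theorem fix_apply {σ : Equiv.Perm (Fin n)} {u : Fin n → ℕ} (h : wact σ u = u) (i : Fin n) :
    u i = u (σ i) := by
  have := congrFun h (σ i)
  simpa [wact] using this

/-- STEP: if the joint stabilizer of (r1, w2) is nontrivial, the twisted column is 0. -/
theorem yp_zero {r1 : Fin n → ℕ} (hfree : ¬ FreePair ((r1 : Fin n → ℕ), w2)) (r : Fin n → ℕ) :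
    (∑ σ : Equiv.Perm (Fin n),
      if wact σ w2 = w2 ∧ wact σ r1 = r then sgn σ else 0) = 0 := by
  simp only [FreePair, not_forall] at hfree
  obtain ⟨π, hπ1, hπ2, hπne⟩ := hfree
  have : ∃ i, π i ≠ i := by
    by_contra hc
    push_neg at hc
    exact hπne (Equiv.ext hc)
  obtain ⟨i, hi⟩ := this
  set τ := Equiv.swap i (π i) with hτ
  have hτw2 : wact τ w2 = w2 := wact_swap (fix_apply hπ2 i)
  have hτr1 : wact τ r1 = r1 := wact_swap (fix_apply hπ1 i)
  have hsτ : sgn τ = -1 := by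
    simp [sgn, hτ, Equiv.Perm.sign_swap (Ne.symm hi)]
  have hτne : τ ≠ 1 := by
    intro hc
    rw [hc, sgn_one] at hsτ
    norm_num at hsτ
  apply Finset.sum_ninvolution (fun σ => σ * τ)
  · intro σ
    have hc : (wact (σ * τ) w2 = w2 ∧ wact (σ * τ) r1 = r) ↔
        (wact σ w2 = w2 ∧ wact σ r1 = r) := by
      rw [← wact_wact, ← wact_wact, hτw2, hτr1]
    by_cases hcond : wact σ w2 = w2 ∧ wact σ r1 = r
    · rw [if_pos hcond, if_pos (hc.2 hcond), sgn_mul, hsτ]; ring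
    · rw [if_neg hcond, if_neg (fun hh => hcond (hc.1 hh))]; ring
  · intro σ _ hc
    exact hτne (mul_left_cancel (a := σ) (hc.trans (mul_one σ).symm))
  · intro σ; exact Finset.mem_univ _
  · intro σ
    have hττ : τ * τ = 1 := Equiv.swap_mul_self _ _
    rw [mul_assoc, hττ, mul_one]

/-- STEP: if (r1, w2) is a free pair, the twisted column is ± the distinguished one. -/
theorem yp_free (h : Complementary w1 w2) {r1 : Fin n → ℕ} (hr1 : IsRearr w1 r1)
    (hfree : FreePair ((r1 : Fin n → ℕ), w2)) :
    ∃ c : ℂ, ∀ r : Fin n → ℕ,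
      (∑ σ : Equiv.Perm (Fin n),
        if wact σ w2 = w2 ∧ wact σ r1 = r then sgn σ else 0) = c * ychar w1 w2 r w2 := by
  obtain ⟨τ, hτ1, hτ2⟩ := h.1.2 (w1, w2) (r1, w2) ⟨1, rfl⟩ ⟨1, rfl⟩ h.2 hr1 ⟨1, rfl⟩ hfree
  dsimp only at hτ1 hτ2
  refine ⟨sgn τ, fun r => ?_⟩
  rw [ychar, Finset.mul_sum]
  refine Fintype.sum_equiv (Equiv.mulRight τ) _ _ (fun π => ?_)
  show _ = sgn τ * (if wact (π * τ) w1 = r ∧ wact (π * τ) w2 = w2 then sgn (π * τ) else 0)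
  have e1 : wact (π * τ) w1 = wact π r1 := by rw [← wact_wact, hτ1]
  have e2 : wact (π * τ) w2 = wact π w2 := by rw [← wact_wact, hτ2]
  rw [e1, e2, sgn_mul]
  by_cases hcond : wact π w2 = w2 ∧ wact π r1 = r
  · rw [if_pos hcond, if_pos ⟨hcond.2, hcond.1⟩,
      show sgn τ * (sgn π * sgn τ) = sgn π * (sgn τ * sgn τ) by ring, sgn_sq, mul_one]
  · rw [if_neg hcond, if_neg (fun hh => hcond ⟨hh.2, hh.1⟩), mul_zero]

/-- kappa of anything is a multiple of the distinguished column. -/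
theorem kappa_mem (h : Complementary w1 w2) (f : Rearr w1 → ℂ) :
    ∃ c : ℂ, kappa w1 w2 f = c • vcol w1 w2 := by
  classical
  have key : ∀ r1 : Rearr w1, ∃ c : ℂ, ∀ r : Rearr w1,
      (∑ σ : Equiv.Perm (Fin n),
        if wact σ w2 = w2 ∧ wact σ r1.1 = r.1 then sgn σ else 0)
        = c * vcol w1 w2 r := by
    intro r1
    by_cases hfree : FreePair ((r1.1 : Fin n → ℕ), w2)
    · obtain ⟨c, hc⟩ := yp_free w1 w2 h r1.2 hfree
      exact ⟨c, fun r => by rw [hc r.1, vcol, spechtCol_eq]; rfl⟩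
    · exact ⟨0, fun r => by rw [yp_zero w2 hfree, zero_mul]⟩
  choose c hc using key
  refine ⟨∑ r1, f r1 * c r1, ?_⟩
  funext r
  have step : ∀ σ : Equiv.Perm (Fin n),
      (if wact σ w2 = w2 then sgn σ * f (ract σ⁻¹ r) else 0) =
      ∑ r1 : Rearr w1, f r1 *
        (if wact σ w2 = w2 ∧ wact σ r1.1 = r.1 then sgn σ else 0) := by
    intro σ
    rw [Finset.sum_eq_single (ract σ⁻¹ r)]
    · have hfix : wact σ (ract σ⁻¹ r).1 = r.1 := ract_inv_eq_iff.mp rfl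
      simp only [hfix, and_true]
      split_ifs <;> ring
    · intro b _ hb
      rw [if_neg, mul_zero]
      rintro ⟨-, h2⟩
      exact hb (ract_inv_eq_iff.mpr h2).symm
    · intro hmem; exact absurd (Finset.mem_univ _) hmem
  have expand : kappa w1 w2 f r = ∑ r1 : Rearr w1, f r1 *
      (∑ σ : Equiv.Perm (Fin n),
        if wact σ w2 = w2 ∧ wact σ r1.1 = r.1 then sgn σ else 0) := by
    rw [kappa]
    simp_rw [step]
    rw [Finset.sum_comm]
    simp_rw [Finset.mul_sum]
  rw [expand]
  simp_rw [hc]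
  rw [Pi.smul_apply, smul_eq_mul, Finset.sum_mul]
  exact Finset.sum_congr rfl (fun x _ => by ring)

theorem conj_spechtCol (r2 : Rearr w2) (r1 : Rearr w1) :
    (starRingEnd ℂ) (spechtCol w1 w2 r2 r1) = spechtCol w1 w2 r2 r1 := by
  simp [spechtCol]

theorem wact_inv_fix {σ : Equiv.Perm (Fin n)} {u : Fin n → ℕ} :
    wact σ⁻¹ u = u ↔ wact σ u = u := by
  constructor
  · intro hh; have := wact_inv_eq hh; rwa [inv_inv] at this
  · intro hh; exact wact_inv_eq hh

/-- equivariance of columns -/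
theorem factC_col (σ : Equiv.Perm (Fin n)) (r2 : Rearr w2) :
    factC σ (spechtCol w1 w2 r2) = sgn σ • spechtCol w1 w2 (ract σ r2) := by
  funext r
  rw [Pi.smul_apply, smul_eq_mul, factC, spechtCol_eq, spechtCol_eq, ychar, ychar,
    Finset.mul_sum]
  refine Fintype.sum_equiv (Equiv.mulLeft σ) _ _ (fun π => ?_)
  show _ = sgn σ * (if wact (σ * π) w1 = r.1 ∧ wact (σ * π) w2 = (ract σ r2).1 then sgn (σ * π) else 0)
  have c1 : wact (σ * π) w1 = r.1 ↔ wact π w1 = (ract σ⁻¹ r).1 := by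
    rw [← wact_wact]
    exact wact_eq_iff
  have c2 : wact (σ * π) w2 = (ract σ r2).1 ↔ wact π w2 = r2.1 := by
    show wact (σ * π) w2 = wact σ r2.1 ↔ _
    rw [← wact_wact, wact_eq_iff]
    constructor
    · intro hh; rw [hh, wact_wact]; simp [wact_one]
    · intro hh; rw [hh, wact_wact]; simp [wact_one]
  by_cases hcond : wact π w1 = (ract σ⁻¹ r).1 ∧ wact π w2 = r2.1
  · rw [if_pos hcond, if_pos ⟨c1.mpr hcond.1, c2.mpr hcond.2⟩, sgn_mul,
      show sgn σ * (sgn σ * sgn π) = (sgn σ * sgn σ) * sgn π by ring, sgn_sq, one_mul]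
  · rw [if_neg hcond, if_neg (fun hh => hcond ⟨c1.mp hh.1, c2.mp hh.2⟩), mul_zero]

/-- each column is ± a translate of the distinguished column -/
theorem col_eq_smul_factC (r2 : Rearr w2) :
    ∃ σ : Equiv.Perm (Fin n),
      spechtCol w1 w2 r2 = sgn σ • factC σ (vcol w1 w2) := by
  obtain ⟨σ, hσ⟩ := r2.2
  refine ⟨σ, ?_⟩
  have : ract σ (w2e w2) = r2 := Subtype.ext hσ
  rw [vcol, factC_col, ← smul_assoc, smul_eq_mul, sgn_sq, one_smul, this]

/-- the Specht module is invariant -/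
theorem specht_invariant (σ : Equiv.Perm (Fin n)) (f : Rearr w1 → ℂ)
    (hf : f ∈ SpechtModule w1 w2) : factC σ f ∈ SpechtModule w1 w2 := by
  induction hf using Submodule.span_induction with
  | mem x hx =>
      obtain ⟨r2, rfl⟩ := hx
      rw [factC_col]
      exact Submodule.smul_mem _ _ (Submodule.subset_span ⟨_, rfl⟩)
  | zero => exact Submodule.zero_mem _
  | add x y _ _ hx hy => rw [factC_add]; exact Submodule.add_mem _ hx hy
  | smul c x _ hx => rw [factC_smul]; exact Submodule.smul_mem _ _ hx

/-- kappa as a combination of group translates -/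
theorem kappa_eq_sum (f : Rearr w1 → ℂ) :
    kappa w1 w2 f = ∑ σ : Equiv.Perm (Fin n),
      if wact σ w2 = w2 then sgn σ • factC σ f else 0 := by
  funext r
  rw [kappa, Finset.sum_apply]
  refine Finset.sum_congr rfl (fun σ _ => ?_)
  split_ifs <;> simp [factC]

theorem kappa_mem_of_invariant (U : Submodule ℂ (Rearr w1 → ℂ))
    (hinv : ∀ σ : Equiv.Perm (Fin n), ∀ f ∈ U, factC σ f ∈ U)
    (f : Rearr w1 → ℂ) (hf : f ∈ U) : kappa w1 w2 f ∈ U := by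
  rw [kappa_eq_sum]
  refine Submodule.sum_mem _ (fun σ _ => ?_)
  split_ifs
  · exact Submodule.smul_mem _ _ (hinv σ f hf)
  · exact Submodule.zero_mem _

/-- the key pairing identity -/
theorem inn_vcol (f : Rearr w1 → ℂ) :
    inn f (vcol w1 w2) = kappa w1 w2 f (w1e w1) := by
  have conjv : ∀ r : Rearr w1, (starRingEnd ℂ) (vcol w1 w2 r) = vcol w1 w2 r :=
    fun r => conj_spechtCol w1 w2 _ r
  have step1 : inn f (vcol w1 w2) = ∑ r : Rearr w1, ∑ σ : Equiv.Perm (Fin n),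
      if wact σ w1 = r.1 ∧ wact σ w2 = w2 then f r * sgn σ else 0 := by
    rw [inn]
    refine Finset.sum_congr rfl (fun r _ => ?_)
    rw [conjv r, vcol, spechtCol_eq, ychar, Finset.mul_sum]
    refine Finset.sum_congr rfl (fun σ _ => ?_)
    split_ifs <;> simp_all [w2e]
  rw [step1, Finset.sum_comm]
  rw [kappa]
  refine Fintype.sum_equiv (Equiv.inv (Equiv.Perm (Fin n))) _ _ (fun σ => ?_)
  simp only [Equiv.inv_apply]
  have inner : ∑ r : Rearr w1,
      (if wact σ w1 = r.1 ∧ wact σ w2 = w2 then f r * sgn σ else 0)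
      = if wact σ w2 = w2 then f (ract σ (w1e w1)) * sgn σ else 0 := by
    rw [Finset.sum_eq_single (ract σ (w1e w1))]
    · have : wact σ w1 = (ract σ (w1e w1)).1 := rfl
      simp only [← this, true_and]
    · intro b _ hb
      rw [if_neg]
      rintro ⟨h1, -⟩
      exact hb (Subtype.ext h1.symm)
    · intro hmem; exact absurd (Finset.mem_univ _) hmem
  rw [inner]
  have hcnd : wact σ⁻¹ w2 = w2 ↔ wact σ w2 = w2 := wact_inv_fix
  by_cases hcond : wact σ w2 = w2
  · rw [if_pos hcond, if_pos (hcnd.mpr hcond), sgn_inv, inv_inv, mul_comm]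
  · rw [if_neg hcond, if_neg (fun hh => hcond (hcnd.mp hh))]

/-- orthogonality: if `kappa` kills `U`, then `U` is orthogonal to all columns -/
theorem inn_col_zero (U : Submodule ℂ (Rearr w1 → ℂ))
    (hinv : ∀ σ : Equiv.Perm (Fin n), ∀ f ∈ U, factC σ f ∈ U)
    (hk : ∀ f ∈ U, kappa w1 w2 f = 0)
    (f : Rearr w1 → ℂ) (hf : f ∈ U) (r2 : Rearr w2) :
    inn f (spechtCol w1 w2 r2) = 0 := by
  obtain ⟨σ, hσ⟩ := col_eq_smul_factC w1 w2 r2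
  rw [hσ, inn_smul, inn_factC, conj_sgn]
  rw [inn_vcol, hk (factC σ⁻¹ f) (hinv σ⁻¹ f hf)]
  simp

/-- positive definiteness -/
theorem inn_self_eq_zero {f : Rearr w1 → ℂ} (hf : inn f f = 0) : f = 0 := by
  have h1 : ∀ r : Rearr w1, f r * (starRingEnd ℂ) (f r) = ((Complex.normSq (f r) : ℝ) : ℂ) :=
    fun r => Complex.mul_conj (f r)
  rw [inn] at hf
  simp_rw [h1] at hf
  rw [← Complex.ofReal_sum] at hf
  rw [Complex.ofReal_eq_zero] at hf
  funext r
  have := (Finset.sum_eq_zero_iff_of_nonneg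
    (fun i _ => Complex.normSq_nonneg (f i))).mp hf r (Finset.mem_univ r)
  simpa using Complex.normSq_eq_zero.mp this

theorem vcol_base (h : Complementary w1 w2) : vcol w1 w2 (w1e w1) = 1 := by
  rw [vcol, spechtCol_eq, ychar]
  rw [Finset.sum_eq_single 1]
  · rw [if_pos ⟨rfl, rfl⟩, sgn_one]
  · intro σ _ hσ
    rw [if_neg]
    rintro ⟨h1, h2⟩
    exact hσ (h.2 σ h1 h2)
  · intro hmem; exact absurd (Finset.mem_univ _) hmem

end SpechtAux

open SpechtAux

/-- For complementary words `w1, w2`, the Specht module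
`V(w1, w2) ⊆ ℂ^{R(w1)}` is nonzero, `S_n`-invariant, and irreducible. -/
theorem specht_stmt_4 {n : ℕ} (w1 w2 : Fin n → ℕ) (h : Complementary w1 w2) :
    SpechtModule w1 w2 ≠ ⊥ ∧
    (∀ σ : Equiv.Perm (Fin n), ∀ f ∈ SpechtModule w1 w2, factC σ f ∈ SpechtModule w1 w2) ∧
    ∀ U : Submodule ℂ (Rearr w1 → ℂ), U ≤ SpechtModule w1 w2 →
      (∀ σ : Equiv.Perm (Fin n), ∀ f ∈ U, factC σ f ∈ U) →
      U = ⊥ ∨ U = SpechtModule w1 w2 := by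
  have hvmem : vcol w1 w2 ∈ SpechtModule w1 w2 :=
    Submodule.subset_span ⟨w2e w2, rfl⟩
  have hvne : vcol w1 w2 ≠ 0 := by
    intro hc
    have := vcol_base w1 w2 h
    rw [hc] at this
    simp at this
  refine ⟨?_, fun σ f hf => specht_invariant w1 w2 σ f hf, ?_⟩
  · intro hbot
    rw [hbot, Submodule.mem_bot] at hvmem
    exact hvne hvmem
  · intro U hle hinv
    by_cases hk : ∀ f ∈ U, kappa w1 w2 f = 0
    · left
      rw [Submodule.eq_bot_iff]
      intro f hf
      have horth : ∀ g ∈ SpechtModule w1 w2, inn f g = 0 := by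
        intro g hg
        induction hg using Submodule.span_induction with
        | mem x hx =>
            obtain ⟨r2, rfl⟩ := hx
            exact inn_col_zero w1 w2 U hinv hk f hf r2
        | zero => simp [inn]
        | add x y _ _ hx hy => rw [inn_add, hx, hy, add_zero]
        | smul c x _ hx => rw [inn_smul, hx, mul_zero]
      exact inn_self_eq_zero w1 (horth f (hle hf))
    · right
      push_neg at hk
      obtain ⟨f, hfU, hfk⟩ := hk
      have hkmem : kappa w1 w2 f ∈ U := kappa_mem_of_invariant w1 w2 U hinv f hfU
      obtain ⟨c, hc⟩ := kappa_mem w1 w2 h f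
      have hcne : c ≠ 0 := by
        intro hc0
        rw [hc0, zero_smul] at hc
        exact hfk hc
      have hvU : vcol w1 w2 ∈ U := by
        have : c⁻¹ • kappa w1 w2 f ∈ U := Submodule.smul_mem _ _ hkmem
        rwa [hc, smul_smul, inv_mul_cancel₀ hcne, one_smul] at this
      refine le_antisymm hle ?_
      rw [SpechtModule, Submodule.span_le]
      rintro g ⟨r2, rfl⟩
      obtain ⟨σ, hσ⟩ := col_eq_smul_factC w1 w2 r2
      rw [hσ]
      exact Submodule.smul_mem _ _ (hinv σ _ hvU)
end

section
/- Let w1, w2 be complementary words of length n (then w2, w1 are also complementary). There is a ℂ-linear isomorphism Φ from the Specht module V(w2, w1) ⊆ ℂ^{R(w2)} onto the dual space of the Specht module V(w1, w2) ⊆ ℂ^{R(w1)} satisfying Φ(σ·u) = sign(σ)·(σ·Φ(u)) for all σ ∈ S_n and u ∈ V(w2, w1), where S_n acts on the dual space by (σ·φ)(v) = φ(σ⁻¹·v). In other words, V(λ*) is isomorphic as an S_n-representation to V(λ)^∨ ⊗ ε, where ε is the sign representation and λ, λ* are the partition and conjugate partition corresponding to (w1, w2) and (w2, w1). -/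
/-! ### Auxiliary material -/

open Matrix

variable {n : ℕ}

lemma wact_injective (σ : Equiv.Perm (Fin n)) :
    Function.Injective (wact (n := n) σ) := by
  intro x y hxy
  funext i
  have := congrFun hxy (σ i)
  simpa [wact] using this

lemma youngChar_comm (w1 w2 x y : Fin n → ℕ) :
    youngChar w2 w1 y x = youngChar w1 w2 x y := by
  unfold youngChar
  exact Finset.sum_congr rfl fun σ _ => if_congr and_comm rfl rfl

lemma youngChar_smul (w1 w2 : Fin n → ℕ) (σ : Equiv.Perm (Fin n)) (r1 r2 : Fin n → ℕ) :
    youngChar w1 w2 (wact σ r1) (wact σ r2)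
      = (Equiv.Perm.sign σ : ℤ) * youngChar w1 w2 r1 r2 := by
  unfold youngChar
  rw [Finset.mul_sum]
  have hcomp := Equiv.sum_comp (Equiv.mulLeft σ)
    (fun τ => if wact τ w1 = wact σ r1 ∧ wact τ w2 = wact σ r2
      then (Equiv.Perm.sign τ : ℤ) else 0)
  rw [← hcomp]
  refine Finset.sum_congr rfl fun τ _ => ?_
  have h1 : wact (σ * τ) w1 = wact σ r1 ↔ wact τ w1 = r1 := by
    rw [← wact_wact]; exact (wact_injective σ).eq_iff
  have h2 : wact (σ * τ) w2 = wact σ r2 ↔ wact τ w2 = r2 := by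
    rw [← wact_wact]; exact (wact_injective σ).eq_iff
  simp only [Equiv.coe_mulLeft]
  simp only [h1, h2]
  by_cases hc : wact τ w1 = r1 ∧ wact τ w2 = r2
  · rw [if_pos hc, if_pos hc, Equiv.Perm.sign_mul, Units.val_mul]
  · rw [if_neg hc, if_neg hc, mul_zero]

lemma ract_ract {w : Fin n → ℕ} (σ τ : Equiv.Perm (Fin n)) (r : Rearr w) :
    ract σ (ract τ r) = ract (σ * τ) r := Subtype.ext (wact_wact σ τ r.1)

lemma ract_one {w : Fin n → ℕ} (r : Rearr w) : ract 1 r = r := Subtype.ext rfl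

/-- `ract σ` as an equivalence. -/
def ractEquiv {w : Fin n → ℕ} (σ : Equiv.Perm (Fin n)) : Rearr w ≃ Rearr w where
  toFun := ract σ
  invFun := ract σ⁻¹
  left_inv r := by rw [ract_ract, inv_mul_cancel, ract_one]
  right_inv r := by rw [ract_ract, mul_inv_cancel, ract_one]

/-- The Specht matrix. -/
noncomputable def spMat (w1 w2 : Fin n → ℕ) : Matrix (Rearr w1) (Rearr w2) ℂ :=
  Matrix.of fun r1 r2 => (youngChar w1 w2 r1.1 r2.1 : ℂ)

lemma spechtModule_eq_range (w1 w2 : Fin n → ℕ) :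
    SpechtModule w1 w2 = LinearMap.range (spMat w1 w2).mulVecLin := by
  rw [Matrix.range_mulVecLin]
  rfl

lemma spMat_transpose (w1 w2 : Fin n → ℕ) : (spMat w1 w2)ᵀ = spMat w2 w1 := by
  ext r2 r1
  simp only [spMat, Matrix.transpose_apply, Matrix.of_apply]
  rw [youngChar_comm]

/-- The pairing with the first argument, restricted to the Specht module. -/
noncomputable def psiAux (w1 w2 : Fin n → ℕ) :
    (Rearr w1 → ℂ) →ₗ[ℂ] Module.Dual ℂ ↥(SpechtModule w1 w2) where
  toFun a :=
    { toFun := fun v => a ⬝ᵥ (v : Rearr w1 → ℂ)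
      map_add' := fun v w => by simp [dotProduct_add]
      map_smul' := fun c v => by simp [dotProduct_smul] }
  map_add' a b := by
    ext v
    simp [add_dotProduct]
  map_smul' c a := by
    ext v
    simp [smul_dotProduct]

lemma psiAux_apply (w1 w2 : Fin n → ℕ) (a : Rearr w1 → ℂ) (v : ↥(SpechtModule w1 w2)) :
    psiAux w1 w2 a v = a ⬝ᵥ (v : Rearr w1 → ℂ) := rfl


/-- For complementary words `w1, w2`, there is a `ℂ`-linear isomorphism
`Φ : V(w2, w1) ≃ (V(w1, w2))^∨` with `Φ(σ·u) = sign(σ) · (σ·Φ(u))`, i.e.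
`V(λ*) ≃ V(λ)^∨ ⊗ ε` as `S_n`-representations.  The equivariance is expressed by
evaluating both sides: whenever `u' = σ·u` in `V(w2, w1)` and `v' = σ⁻¹·v` in
`V(w1, w2)`, we have `Φ(u')(v) = sign(σ) · Φ(u)(v')`. -/
theorem specht_stmt_6 {n : ℕ} (w1 w2 : Fin n → ℕ) (h : Complementary w1 w2) :
    Complementary w2 w1 ∧
    ∃ Φ : ↥(SpechtModule w2 w1) ≃ₗ[ℂ] Module.Dual ℂ ↥(SpechtModule w1 w2),
      ∀ (σ : Equiv.Perm (Fin n)) (u u' : SpechtModule w2 w1),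
        (u' : Rearr w2 → ℂ) = factC σ (u : Rearr w2 → ℂ) →
        ∀ (v v' : SpechtModule w1 w2),
          (v' : Rearr w1 → ℂ) = factC σ⁻¹ (v : Rearr w1 → ℂ) →
          Φ u' v = ((Equiv.Perm.sign σ : ℤ) : ℂ) * Φ u v' := by
  classical
  have hcompl : Complementary w2 w1 := by
    obtain ⟨⟨⟨p, hp1, hp2, hpf⟩, huniq⟩, hfree⟩ := h
    refine ⟨⟨⟨(p.2, p.1), hp2, hp1, fun σ h1 h2 => hpf σ h2 h1⟩, ?_⟩,
      fun σ h1 h2 => hfree σ h2 h1⟩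
    intro q r hq1 hq2 hqf hr1 hr2 hrf
    obtain ⟨σ, hσ1, hσ2⟩ := huniq (q.2, q.1) (r.2, r.1) hq2 hq1
      (fun σ a b => hqf σ b a) hr2 hr1 (fun σ a b => hrf σ b a)
    exact ⟨σ, hσ2, hσ1⟩
  refine ⟨hcompl, ?_⟩
  set M : Matrix (Rearr w1) (Rearr w2) ℂ := spMat w1 w2 with hMdef
  set T : (Rearr w1 → ℂ) →ₗ[ℂ] (Rearr w2 → ℂ) := Mᵀ.mulVecLin with hTdef
  have hMod1 : SpechtModule w1 w2 = LinearMap.range M.mulVecLin :=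
    spechtModule_eq_range w1 w2
  have hMod2 : SpechtModule w2 w1 = LinearMap.range T := by
    rw [hTdef, hMdef, spMat_transpose]
    exact spechtModule_eq_range w2 w1
  rw [hMod2]
  -- the pairing map
  have hker : LinearMap.ker T ≤ LinearMap.ker (psiAux w1 w2) := by
    intro a ha
    rw [LinearMap.mem_ker] at ha ⊢
    ext v
    have hv : (v : Rearr w1 → ℂ) ∈ LinearMap.range M.mulVecLin := hMod1 ▸ v.2
    obtain ⟨b, hb⟩ := hv
    have : psiAux w1 w2 a v = a ⬝ᵥ M.mulVec b := by
      rw [psiAux_apply, ← hb]; rfl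
    rw [LinearMap.zero_apply, this, Matrix.dotProduct_mulVec, ← Matrix.mulVec_transpose]
    have haz : Mᵀ.mulVec a = 0 := ha
    rw [haz, zero_dotProduct]
  set Φ₀ : ↥(LinearMap.range T) →ₗ[ℂ] Module.Dual ℂ ↥(SpechtModule w1 w2) :=
    ((LinearMap.ker T).liftQ (psiAux w1 w2) hker) ∘ₗ
      (T.quotKerEquivRange).symm.toLinearMap with hΦ₀def
  have hPhi0 : ∀ (a : Rearr w1 → ℂ) (hmem : T a ∈ LinearMap.range T),
      Φ₀ ⟨T a, hmem⟩ = psiAux w1 w2 a := by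
    intro a hmem
    have h1 : (T.quotKerEquivRange).symm ⟨T a, hmem⟩
        = Submodule.Quotient.mk a := by
      rw [LinearEquiv.symm_apply_eq]
      exact Subtype.ext (T.quotKerEquivRange_apply_mk a)
    rw [hΦ₀def]
    simp only [LinearMap.coe_comp, LinearEquiv.coe_coe, Function.comp_apply, h1,
      Submodule.liftQ_apply]
  have hker0 : ∀ u : ↥(LinearMap.range T), Φ₀ u = 0 → u = 0 := by
    rintro ⟨-, a, rfl⟩ hu
    replace hu : psiAux w1 w2 a = 0 := (hPhi0 a ⟨a, rfl⟩).symm.trans hu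
    have hz : Mᵀ.mulVec a = 0 := by
      funext r2
      have hv : M.mulVec (Pi.single r2 1) ∈ SpechtModule w1 w2 := by
        rw [hMod1]; exact ⟨Pi.single r2 1, rfl⟩
      have := congrFun (congrArg DFunLike.coe hu) ⟨M.mulVec (Pi.single r2 1), hv⟩
      rw [psiAux_apply] at this
      simp only [LinearMap.zero_apply] at this
      have h2 : a ⬝ᵥ M.mulVec (Pi.single r2 1) = (Mᵀ.mulVec a) r2 := by
        rw [Matrix.dotProduct_mulVec, ← Matrix.mulVec_transpose,
          dotProduct_single, mul_one]
      rw [h2] at this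
      simpa using this
    have hTz : T a = 0 := hz
    exact Subtype.ext hTz
  have hinj : Function.Injective Φ₀ :=
    LinearMap.ker_eq_bot.mp (LinearMap.ker_eq_bot'.mpr hker0)
  have hfr : Module.finrank ℂ ↥(LinearMap.range T)
      = Module.finrank ℂ (Module.Dual ℂ ↥(SpechtModule w1 w2)) := by
    rw [Subspace.dual_finrank_eq, hMod1]
    have := Matrix.rank_transpose M
    simpa [Matrix.rank, hTdef] using this
  refine ⟨LinearMap.linearEquivOfInjective Φ₀ hinj hfr, ?_⟩
  intro σ u u' hu' v v' hv'
  obtain ⟨a, ha⟩ := u.2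
  set s : ℂ := ((Equiv.Perm.sign σ : ℤ) : ℂ) with hs
  have hss : s * s = 1 := by
    have hz : (Equiv.Perm.sign σ : ℤ) * (Equiv.Perm.sign σ : ℤ) = 1 := by
      rcases Int.units_eq_one_or (Equiv.Perm.sign σ) with hc | hc <;> simp [hc]
    rw [hs, ← Int.cast_mul, hz, Int.cast_one]
  set a' : Rearr w1 → ℂ := fun t => s * a (ract σ⁻¹ t) with ha'
  have hTa' : T a' = (u' : Rearr w2 → ℂ) := by
    rw [hu', ← ha]
    funext r2
    show (Mᵀ.mulVec a') r2 = (Mᵀ.mulVec a) (ract σ⁻¹ r2)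
    simp only [Matrix.mulVec, dotProduct]
    rw [← Fintype.sum_equiv (ractEquiv (w := w1) σ)
      (fun t => Mᵀ r2 (ractEquiv σ t) * a' (ractEquiv σ t)) _ (fun t => rfl)]
    refine Finset.sum_congr rfl fun t _ => ?_
    have h1 : a' ((ractEquiv (w := w1) σ) t) = s * a t := by
      simp only [ractEquiv, Equiv.coe_fn_mk, ha']
      rw [ract_ract, inv_mul_cancel, ract_one]
    have h2 : Mᵀ r2 ((ractEquiv (w := w1) σ) t)
        = s * Mᵀ (ract σ⁻¹ r2) t := by
      show (M ((ract σ t)) r2 : ℂ) = s * M t (ract σ⁻¹ r2)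
      have : (youngChar w1 w2 (wact σ t.1) r2.1 : ℤ)
          = (Equiv.Perm.sign σ : ℤ) * youngChar w1 w2 t.1 (wact σ⁻¹ r2.1) := by
        have := youngChar_smul w1 w2 σ t.1 (wact σ⁻¹ r2.1)
        rwa [wact_wact, mul_inv_cancel, show wact 1 r2.1 = r2.1 from rfl] at this
      show ((youngChar w1 w2 (wact σ t.1) r2.1 : ℤ) : ℂ)
          = s * ((youngChar w1 w2 t.1 (wact σ⁻¹ r2.1) : ℤ) : ℂ)
      rw [this]
      push_cast [hs]
      ring
    rw [h1, h2, mul_mul_mul_comm, hss, one_mul]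
  have hu'mem : (u' : Rearr w2 → ℂ) ∈ LinearMap.range T := u'.2
  have hΦu' : (LinearMap.linearEquivOfInjective Φ₀ hinj hfr) u' = psiAux w1 w2 a' := by
    have : u' = ⟨T a', ⟨a', rfl⟩⟩ := Subtype.ext hTa'.symm
    rw [this, LinearMap.linearEquivOfInjective_apply]
    exact hPhi0 a' ⟨a', rfl⟩
  have hΦu : (LinearMap.linearEquivOfInjective Φ₀ hinj hfr) u = psiAux w1 w2 a := by
    have : u = ⟨T a, ⟨a, rfl⟩⟩ := Subtype.ext ha.symm
    rw [this, LinearMap.linearEquivOfInjective_apply]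
    exact hPhi0 a ⟨a, rfl⟩
  rw [hΦu', hΦu, psiAux_apply, psiAux_apply]
  -- a' ⬝ᵥ v = s * (a ⬝ᵥ v')
  have hv't : ∀ t : Rearr w1, (v' : Rearr w1 → ℂ) t = (v : Rearr w1 → ℂ) (ract σ t) := by
    intro t
    rw [hv']
    show (v : Rearr w1 → ℂ) (ract σ⁻¹⁻¹ t) = _
    rw [inv_inv]
  simp only [dotProduct]
  rw [Finset.mul_sum]
  rw [← Fintype.sum_equiv (ractEquiv (w := w1) σ)
    (fun t => a' (ractEquiv σ t) * (v : Rearr w1 → ℂ) (ractEquiv σ t)) _ (fun t => rfl)]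
  refine Finset.sum_congr rfl fun t _ => ?_
  have h1 : a' ((ractEquiv (w := w1) σ) t) = s * a t := by
    simp only [ractEquiv, Equiv.coe_fn_mk, ha']
    rw [ract_ract, inv_mul_cancel, ract_one]
  rw [h1, hv't t]
  show s * a t * (v : Rearr w1 → ℂ) (ract σ t) = s * (a t * (v : Rearr w1 → ℂ) (ract σ t))
  ring
end

section
/- Let w1, w2 be complementary words of length n, and suppose w1 has a repeated letter, i.e., w1(i) = w1(j) for some i ≠ j (equivalently, the corresponding partition λ is not (1,1,…,1)). Then for every r1 ∈ R(w1), the sum Σ_{r2 ∈ R(w2)} Y(r1, r2) equals 0; equivalently, every row of the Specht matrix has as many entries equal to 1 as entries equal to −1, and the sum of all columns of the Specht matrix is the zero vector. -/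
/-- If `w1` has a repeated letter, then every row of the Specht matrix
sums to zero; equivalently the sum of all columns of the Specht matrix is `0`. -/
theorem specht_stmt_9 {n : ℕ} (w1 w2 : Fin n → ℕ) (hc : Complementary w1 w2)
    (hrep : ∃ i j : Fin n, i ≠ j ∧ w1 i = w1 j) :
    (∀ r1 : Fin n → ℕ, IsRearr w1 r1 → ∑ r2 : Rearr w2, youngChar w1 w2 r1 r2.1 = 0) ∧
    ∑ r2 : Rearr w2, spechtColR w1 w2 r2 = 0 := by
  obtain ⟨i, j, hij, hrep⟩ := hrep
  set τ := Equiv.swap i j with hτ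
  have hτw : wact τ w1 = w1 := by
    funext x
    simp only [wact, Function.comp, hτ, Equiv.symm_swap]
    rcases eq_or_ne x i with rfl | hi
    · rw [Equiv.swap_apply_left]; exact hrep.symm
    rcases eq_or_ne x j with rfl | hj
    · rw [Equiv.swap_apply_right]; exact hrep
    · rw [Equiv.swap_apply_of_ne_of_ne hi hj]
  have key : ∀ r1 : Fin n → ℕ, ∑ r2 : Rearr w2, youngChar w1 w2 r1 r2.1 = 0 := by
    intro r1
    have step1 : ∑ r2 : Rearr w2, youngChar w1 w2 r1 r2.1
        = ∑ σ : Equiv.Perm (Fin n),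
            if wact σ w1 = r1 then (Equiv.Perm.sign σ : ℤ) else 0 := by
      simp only [youngChar]
      rw [Finset.sum_comm]
      refine Finset.sum_congr rfl fun σ _ => ?_
      rw [Finset.sum_eq_single (⟨wact σ w2, σ, rfl⟩ : Rearr w2)]
      · simp
      · intro b _ hb
        rw [if_neg]
        rintro ⟨-, h2⟩
        exact hb (Subtype.ext h2.symm)
      · intro h; exact absurd (Finset.mem_univ _) h
    rw [step1]
    have hneg : ∀ σ : Equiv.Perm (Fin n),
        (if wact (σ * τ) w1 = r1 then (Equiv.Perm.sign (σ * τ) : ℤ) else 0)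
        = -(if wact σ w1 = r1 then (Equiv.Perm.sign σ : ℤ) else 0) := by
      intro σ
      rw [← wact_wact, hτw, map_mul, Equiv.Perm.sign_swap hij]
      split <;> simp
    have hsum : ∑ σ : Equiv.Perm (Fin n),
          (if wact σ w1 = r1 then (Equiv.Perm.sign σ : ℤ) else 0)
        = ∑ σ : Equiv.Perm (Fin n),
          (if wact (σ * τ) w1 = r1 then (Equiv.Perm.sign (σ * τ) : ℤ) else 0) :=
      (Finset.sum_equiv (Equiv.mulRight τ) (by simp) (by simp)).symm
    have := hsum
    simp only [hneg, Finset.sum_neg_distrib] at this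
    linarith
  refine ⟨fun r1 _ => key r1, ?_⟩
  funext r1
  have := key r1.1
  simp only [Finset.sum_apply, spechtColR, Pi.zero_apply]
  exact_mod_cast congrArg (fun z : ℤ => (z : ℝ)) this
end

section
/- Let λ be a partition of n other than (1,1,…,1) (i.e., λ_1 ≥ 2), and let (w1, w2) be a complementary pair of words corresponding to λ. Then the origin of ℝ^{R(w1)} belongs to the Specht polytope P(λ), the convex hull of the columns of the real Specht matrix. -/
-- aux
lemma aux_sign_sum {n : ℕ} (w1 : Fin n → ℕ) (τ : Equiv.Perm (Fin n))
    (hτ : wact τ w1 = w1) (hs : (Equiv.Perm.sign τ : ℤ) = -1) (r : Fin n → ℕ) :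
    ∑ σ : Equiv.Perm (Fin n), (if wact σ w1 = r then (Equiv.Perm.sign σ : ℤ) else 0) = 0 := by
  set f : Equiv.Perm (Fin n) → ℤ :=
    fun σ => if wact σ w1 = r then (Equiv.Perm.sign σ : ℤ) else 0 with hf
  have h1 : ∑ σ : Equiv.Perm (Fin n), f (σ * τ) = ∑ σ, f σ :=
    Fintype.sum_equiv (Equiv.mulRight τ) _ _ (fun σ => rfl)
  have h2 : ∀ σ, f (σ * τ) = - f σ := by
    intro σ
    have hcond : wact (σ * τ) w1 = wact σ w1 := by
      rw [← wact_wact, hτ]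
    have hsig : (Equiv.Perm.sign (σ * τ) : ℤ) = -(Equiv.Perm.sign σ : ℤ) := by
      rw [map_mul]; push_cast; rw [hs]; ring
    simp only [hf, hcond, hsig]
    split_ifs <;> simp
  rw [Finset.sum_congr rfl (fun σ _ => h2 σ), Finset.sum_neg_distrib] at h1
  linarith

lemma aux_col_sum {n : ℕ} (w1 w2 : Fin n → ℕ) (τ : Equiv.Perm (Fin n))
    (hτ : wact τ w1 = w1) (hs : (Equiv.Perm.sign τ : ℤ) = -1) (r1 : Fin n → ℕ) :
    ∑ r2 : Rearr w2, youngChar w1 w2 r1 r2.1 = 0 := by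
  unfold youngChar
  rw [Finset.sum_comm]
  rw [show (∑ σ : Equiv.Perm (Fin n), ∑ r2 : Rearr w2,
      if wact σ w1 = r1 ∧ wact σ w2 = r2.1 then (Equiv.Perm.sign σ : ℤ) else 0)
      = ∑ σ : Equiv.Perm (Fin n), (if wact σ w1 = r1 then (Equiv.Perm.sign σ : ℤ) else 0) from ?_]
  · exact aux_sign_sum w1 τ hτ hs r1
  refine Finset.sum_congr rfl (fun σ _ => ?_)
  have : ∀ r2 : Rearr w2, (wact σ w2 = r2.1) ↔ r2 = ⟨wact σ w2, σ, rfl⟩ := by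
    intro r2
    constructor
    · intro h; exact Subtype.ext h.symm
    · intro h; rw [h]
  simp_rw [this]
  by_cases h : wact σ w1 = r1
  · simp [h]
  · simp [h]

/-- If `λ` is a partition of `n` other than `(1,1,…,1)` (i.e. `λ_1 ≥ 2`),
then the origin belongs to the Specht polytope `P(λ)`. -/
theorem specht_stmt_10 {n : ℕ} (l : List ℕ) (hl : SortedPartList l) (hsum : l.sum = n)
    (hne : 2 ≤ l.getD 0 0)
    (w1 w2 : Fin n → ℕ) (hc : Complementary w1 w2) (hcorr : CorrespondsTo w1 w2 l) :
    (0 : Rearr w1 → ℝ) ∈ SpechtPolytope w1 w2 := by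
  -- find a repeated letter in w1
  have hlne : l ≠ [] := by
    intro h; rw [h] at hne; simp at hne
  obtain ⟨a, t, rfl⟩ := List.exists_cons_of_ne_nil hlne
  have ha : (2 : ℕ) ≤ a := hne
  have hmem : a ∈ multMultiset w1 := by
    rw [← hcorr.1.2]; exact List.mem_cons_self
  obtain ⟨v, hv, hcard⟩ := Multiset.mem_map.1 hmem
  have hcard2 : 1 < (Finset.univ.filter (fun i => w1 i = v)).card := by omega
  obtain ⟨i, hi, j, hj, hij⟩ := Finset.one_lt_card.1 hcard2
  have hwi : w1 i = v := (Finset.mem_filter.1 hi).2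
  have hwj : w1 j = v := (Finset.mem_filter.1 hj).2
  set τ := Equiv.swap i j with hτdef
  have hτ : wact τ w1 = w1 := by
    funext k
    change w1 (τ.symm k) = w1 k
    rw [Equiv.symm_swap, Equiv.swap_apply_def]
    split_ifs with h1 h2 <;> simp_all
  have hs : (Equiv.Perm.sign τ : ℤ) = -1 := by
    rw [Equiv.Perm.sign_swap hij]; rfl
  -- sum of columns is zero
  have hcols : ∑ r2 : Rearr w2, spechtColR w1 w2 r2 = (0 : Rearr w1 → ℝ) := by
    funext r1
    rw [Finset.sum_apply]
    have := aux_col_sum w1 w2 τ hτ hs r1.1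
    simp only [spechtColR]
    rw [← Int.cast_sum, this, Int.cast_zero]; rfl
  -- Rearr w2 is nonempty
  have hne2 : Nonempty (Rearr w2) := ⟨⟨w2, 1, rfl⟩⟩
  have hcardpos : (0 : ℝ) < ∑ _r2 : Rearr w2, (1 : ℝ) := by
    rw [Finset.sum_const, nsmul_eq_mul, mul_one]
    exact_mod_cast Fintype.card_pos
  have hcm : (0 : Rearr w1 → ℝ)
      = Finset.univ.centerMass (fun _ : Rearr w2 => (1 : ℝ)) (spechtColR w1 w2) := by
    rw [Finset.centerMass]
    simp only [one_smul]
    rw [hcols, smul_zero]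
  rw [SpechtPolytope, hcm]
  exact Finset.centerMass_mem_convexHull _ (fun _ _ => zero_le_one) hcardpos
    (fun r2 _ => Set.mem_range_self r2)
end

section
/- Let λ be a partition of n other than (1,1,…,1), and let (w1, w2) be a complementary pair of words corresponding to λ. Then the dimension of the Specht polytope P(λ) (the dimension of the direction of the affine span of P(λ) in ℝ^{R(w1)}) equals the dimension of the ℝ-linear span of the columns of the real Specht matrix, i.e., the rank of the Specht matrix, which is the dimension of the Specht module V(λ). -/
open Submodule in

lemma finrank_span_complexify {ι κ : Type*} [Fintype ι] [Fintype κ] (f : κ → ι → ℝ) :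
    Module.finrank ℝ (span ℝ (Set.range f))
      = Module.finrank ℂ (span ℂ (Set.range (fun k i => (f k i : ℂ)))) := by
  classical
  obtain ⟨t, hts, hspan, hlin⟩ := exists_linearIndependent ℝ (Set.range f)
  have htfin : t.Finite := (Set.finite_range f).subset hts
  haveI : Fintype t := htfin.fintype
  let c : (ι → ℝ) →ₗ[ℝ] (ι → ℂ) :=
    LinearMap.compLeft Complex.ofRealAm.toLinearMap ι
  have hc : ∀ w : ι → ℝ, c w = fun i => (w i : ℂ) := fun w => rfl
  let v : t → (ι → ℂ) := fun x => c x.1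
  have hv : ∀ (x : t) (i : ι), v x i = ((x : ι → ℝ) i : ℂ) := fun x i => rfl
  have hvlin : LinearIndependent ℂ v := by
    rw [Fintype.linearIndependent_iff]
    intro g hg x
    have hre : ∀ i : ι, (∑ y : t, (g y).re * ((y : ι → ℝ) i)) = 0 := by
      intro i
      have h := congrFun hg i
      simp only [Finset.sum_apply, Pi.smul_apply, Pi.zero_apply, smul_eq_mul] at h
      have h2 := congrArg Complex.re h
      simpa [Complex.mul_re, hv] using h2
    have him : ∀ i : ι, (∑ y : t, (g y).im * ((y : ι → ℝ) i)) = 0 := by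
      intro i
      have h := congrFun hg i
      simp only [Finset.sum_apply, Pi.smul_apply, Pi.zero_apply, smul_eq_mul] at h
      have h2 := congrArg Complex.im h
      simpa [Complex.mul_im, hv] using h2
    have h1 := (Fintype.linearIndependent_iff.mp hlin) (fun y => (g y).re)
      (by ext i; simpa using hre i)
    have h2 := (Fintype.linearIndependent_iff.mp hlin) (fun y => (g y).im)
      (by ext i; simpa using him i)
    exact Complex.ext (h1 x) (h2 x)
  have hspan2 : span ℂ (Set.range (fun k i => (f k i : ℂ))) = span ℂ (Set.range v) := by
    apply le_antisymm
    · rw [span_le]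
      rintro - ⟨k, rfl⟩
      have hf : f k ∈ span ℝ t := hspan ▸ subset_span ⟨k, rfl⟩
      have hmap : c (f k) ∈ Submodule.map c (span ℝ t) := ⟨f k, hf, rfl⟩
      rw [Submodule.map_span] at hmap
      have hsub : c '' t ⊆ ((span ℂ (Set.range v)).restrictScalars ℝ : Set (ι → ℂ)) := by
        rintro - ⟨y, hy, rfl⟩
        exact subset_span ⟨⟨y, hy⟩, rfl⟩
      have hm := span_le.mpr hsub hmap
      have he : (fun i => ((f k i : ℂ))) = c (f k) := (hc _).symm
      show (fun i => ((f k i : ℂ))) ∈ (span ℂ (Set.range v) : Set (ι → ℂ))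
      rw [he]
      exact hm
    · rw [span_le]
      rintro - ⟨y, rfl⟩
      obtain ⟨k, hk⟩ := hts y.2
      refine subset_span ⟨k, ?_⟩
      show (fun i => ((f k) i : ℂ)) = v y
      funext i
      rw [hv y i, hk]
  rw [hspan2, ← hspan]
  rw [finrank_span_eq_card hvlin, finrank_span_set_eq_card hlin]
  simp [Set.toFinset_card]

open Submodule in

lemma vectorSpan_eq_span_of_sum_zero {ι κ : Type*} [Fintype ι] [Fintype κ] [Nonempty κ]
    (f : κ → ι → ℝ) (h0 : ∑ k, f k = 0) :
    vectorSpan ℝ (Set.range f) = span ℝ (Set.range f) := by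
  apply le_antisymm
  · rw [vectorSpan, span_le]
    rintro - ⟨a, ha, b, hb, rfl⟩
    simpa [vsub_eq_sub] using sub_mem (subset_span ha) (subset_span hb)
  · rw [span_le]
    rintro - ⟨k, rfl⟩
    have hN : (0 : ℝ) < (Fintype.card κ : ℝ) := by
      exact_mod_cast Fintype.card_pos
    have hsum : ∑ j : κ, (f k - f j) = (Fintype.card κ : ℝ) • f k := by
      rw [Finset.sum_sub_distrib, h0, sub_zero, Finset.sum_const, Finset.card_univ]
      simp [← Nat.cast_smul_eq_nsmul ℝ]
    have hk : f k = (Fintype.card κ : ℝ)⁻¹ • ∑ j : κ, (f k - f j) := by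
      rw [hsum, smul_smul, inv_mul_cancel₀ hN.ne', one_smul]
    rw [hk]
    refine Submodule.smul_mem _ _ (Submodule.sum_mem _ fun j _ => ?_)
    have := vsub_mem_vectorSpan ℝ (Set.mem_range_self (f := f) k) (Set.mem_range_self j)
    simpa [vsub_eq_sub] using this

lemma sum_youngChar_eq_zero {n : ℕ} (w1 w2 : Fin n → ℕ) (i j : Fin n) (hij : i ≠ j)
    (hw : w1 i = w1 j) (r1 : Rearr w1) :
    ∑ r2 : Rearr w2, youngChar w1 w2 r1.1 r2.1 = 0 := by
  classical
  simp only [youngChar]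
  rw [Finset.sum_comm]
  have hinner : ∀ σ : Equiv.Perm (Fin n),
      ∑ r2 : Rearr w2, (if wact σ w1 = r1.1 ∧ wact σ w2 = r2.1
          then (Equiv.Perm.sign σ : ℤ) else 0)
        = if wact σ w1 = r1.1 then (Equiv.Perm.sign σ : ℤ) else 0 := by
    intro σ
    rw [Finset.sum_eq_single (⟨wact σ w2, σ, rfl⟩ : Rearr w2)]
    · simp
    · intro b _ hb
      rw [if_neg]
      rintro ⟨-, h2⟩
      exact hb (Subtype.ext h2.symm)
    · intro h
      exact absurd (Finset.mem_univ _) h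
  simp only [hinner]
  set F : Equiv.Perm (Fin n) → ℤ :=
    fun σ => if wact σ w1 = r1.1 then (Equiv.Perm.sign σ : ℤ) else 0 with hF
  show ∑ σ : Equiv.Perm (Fin n), F σ = 0
  set τ := Equiv.swap i j with hτ
  have hτw : wact τ w1 = w1 := by
    funext k
    simp only [wact, Function.comp_apply, hτ, Equiv.symm_swap]
    rcases eq_or_ne k i with rfl | hki
    · rw [Equiv.swap_apply_left, hw]
    rcases eq_or_ne k j with rfl | hkj
    · rw [Equiv.swap_apply_right, hw]
    · rw [Equiv.swap_apply_of_ne_of_ne hki hkj]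
  have hneg : ∀ σ, F (σ * τ) = -F σ := by
    intro σ
    have h1 : wact (σ * τ) w1 = wact σ w1 := by rw [← wact_wact, hτw]
    have h2 : (Equiv.Perm.sign (σ * τ) : ℤ) = -(Equiv.Perm.sign σ : ℤ) := by
      rw [map_mul, Equiv.Perm.sign_swap hij]
      simp
    simp only [hF, h1, h2]
    split_ifs <;> simp
  have hcomp : ∑ σ : Equiv.Perm (Fin n), F (σ * τ) = ∑ σ : Equiv.Perm (Fin n), F σ :=
    Equiv.sum_comp (Equiv.mulRight τ) F
  have h4 : ∑ σ : Equiv.Perm (Fin n), F (σ * τ) = -∑ σ : Equiv.Perm (Fin n), F σ := by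
    simp [hneg]
  omega

/-- For `λ ≠ (1,…,1)`, the dimension of the Specht polytope (the
dimension of the direction of its affine span) equals the rank of the Specht matrix
(the dimension of the span of its columns), which is the dimension of the Specht
module `V(λ)`. -/
theorem specht_stmt_11 {n : ℕ} (l : List ℕ) (hl : SortedPartList l) (hsum : l.sum = n)
    (hne : 2 ≤ l.getD 0 0)
    (w1 w2 : Fin n → ℕ) (hc : Complementary w1 w2) (hcorr : CorrespondsTo w1 w2 l) :
    Module.finrank ℝ (affineSpan ℝ (SpechtPolytope w1 w2)).direction
        = Module.finrank ℝ (Submodule.span ℝ (Set.range (spechtColR w1 w2))) ∧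
    Module.finrank ℝ (Submodule.span ℝ (Set.range (spechtColR w1 w2)))
        = Module.finrank ℂ (SpechtModule w1 w2) := by
  classical
  -- extract a repeated letter in w1
  obtain ⟨i, j, hij, hw⟩ : ∃ i j : Fin n, i ≠ j ∧ w1 i = w1 j := by
    obtain ⟨a, L, rfl⟩ : ∃ a L, l = a :: L := by
      cases l with
      | nil => simp at hne
      | cons a L => exact ⟨a, L, rfl⟩
    have ha : 2 ≤ a := by simpa using hne
    have hmem : a ∈ multMultiset w1 := by
      rw [← hcorr.1.2]
      simp
    rw [multMultiset, Multiset.mem_map] at hmem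
    obtain ⟨v, -, hv⟩ := hmem
    have h2 : 1 < (Finset.univ.filter (fun i => w1 i = v)).card := by omega
    obtain ⟨x, hx, y, hy, hxy⟩ := Finset.one_lt_card.mp h2
    rw [Finset.mem_filter] at hx hy
    exact ⟨x, y, hxy, hx.2.trans hy.2.symm⟩
  haveI : Nonempty (Rearr w2) := ⟨⟨w2, 1, rfl⟩⟩
  have h0 : ∑ k : Rearr w2, spechtColR w1 w2 k = 0 := by
    funext r1
    have := sum_youngChar_eq_zero w1 w2 i j hij hw r1
    simp only [Finset.sum_apply, spechtColR, Pi.zero_apply]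
    exact_mod_cast congrArg (fun z : ℤ => (z : ℝ)) this
  constructor
  · rw [SpechtPolytope, affineSpan_convexHull, direction_affineSpan,
      vectorSpan_eq_span_of_sum_zero _ h0]
  · rw [SpechtModule]
    have hcols : (fun (k : Rearr w2) (r1 : Rearr w1) => ((spechtColR w1 w2 k r1 : ℝ) : ℂ))
        = spechtCol w1 w2 := by
      funext k r1
      simp [spechtColR, spechtCol]
    rw [← hcols]
    exact finrank_span_complexify (spechtColR w1 w2)
end
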